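/- arXiv:1310.6128 — 8 statements merged into one kernel-verified Lean document; each statement's English description precedes it below -/
import Mathlib

section
/- There is a universal constant C < ∞ such that for every x ∈ [0,1/2]² with x ≠ (0,0): ∫_{Q(2x)} y₁ x₂ / ( |x−y|² |x−ỹ|² ) dy ≤ C, where Q(2x) := [2x₁,1] × [2x₂,1] and ỹ := (−y₁, y₂). -/
open MeasureTheory Set

set_option maxHeartbeats 1000000

noncomputable section

lemma inner_bound (c t a : ℝ) (hc : 0 ≤ c) (ht : 0 < t) (ha : 0 ≤ a) (ha1 : a ≤ 1) :
    ∫⁻ u in Icc a 1, ENNReal.ofReal (16 * u * c / ((u ^ 2 + t ^ 2) ^ 2))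
      ≤ ENNReal.ofReal (8 * c / t ^ 2) := by
  have hcont : Continuous fun u : ℝ => 16 * u * c / ((u ^ 2 + t ^ 2) ^ 2) := by
    apply Continuous.div (by fun_prop) (by fun_prop)
    intro u; positivity
  rw [MeasureTheory.Measure.restrict_congr_set Ioc_ae_eq_Icc.symm]
  rw [← ofReal_integral_eq_lintegral_ofReal (hcont.integrableOn_Ioc)]
  · apply ENNReal.ofReal_le_ofReal
    rw [← intervalIntegral.integral_of_le ha1]
    have hFTC : ∫ u in a..1, 16 * u * c / ((u ^ 2 + t ^ 2) ^ 2)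
        = (-8 * c / (1 ^ 2 + t ^ 2)) - (-8 * c / (a ^ 2 + t ^ 2)) := by
      apply intervalIntegral.integral_eq_sub_of_hasDerivAt
        (f := fun u => -8 * c / (u ^ 2 + t ^ 2))
      · intro u _
        have h0 : u ^ 2 + t ^ 2 ≠ 0 := by positivity
        have h1 : HasDerivAt (fun u : ℝ => u ^ 2 + t ^ 2) (2 * u) u := by
          simpa using ((hasDerivAt_pow 2 u).add_const (t ^ 2))
        have := ((h1.inv h0).const_mul (-8 * c))
        convert this using 1
        · rfl
        · funext y; simp only [Pi.inv_apply]; ring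
        · ring
      · exact hcont.intervalIntegrable _ _
    rw [hFTC]
    have h1 : -8 * c / (1 ^ 2 + t ^ 2) ≤ 0 := by
      apply div_nonpos_of_nonpos_of_nonneg <;> nlinarith
    have h2 : 8 * c / (a ^ 2 + t ^ 2) ≤ 8 * c / t ^ 2 := by
      apply div_le_div_of_nonneg_left (by linarith) (by positivity) (by nlinarith)
    have : -(-8 * c / (a ^ 2 + t ^ 2)) = 8 * c / (a ^ 2 + t ^ 2) := by ring_nf
    linarith [this]
  · filter_upwards [ae_restrict_mem measurableSet_Ioc] with u hu
    have : (0:ℝ) < u := lt_of_le_of_lt ha hu.1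
    positivity


lemma outer_bound (c : ℝ) (hc : 0 < c) (hc2 : c ≤ 1 / 2) :
    ∫⁻ v in Icc (2 * c) 1, ENNReal.ofReal (8 * c / (v - c) ^ 2)
      ≤ ENNReal.ofReal 8 := by
  have hle : 2 * c ≤ 1 := by linarith
  have hcont : ContinuousOn (fun v : ℝ => 8 * c / (v - c) ^ 2) (Icc (2 * c) 1) := by
    apply ContinuousOn.div (by fun_prop) (by fun_prop)
    intro v hv
    have : c < v := by have := hv.1; linarith
    have : v - c ≠ 0 := by linarith
    positivity
  rw [MeasureTheory.Measure.restrict_congr_set Ioc_ae_eq_Icc.symm]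
  rw [← ofReal_integral_eq_lintegral_ofReal
      ((hcont.integrableOn_Icc).mono_set Ioc_subset_Icc_self)]
  · apply ENNReal.ofReal_le_ofReal
    rw [← intervalIntegral.integral_of_le hle]
    have hFTC : ∫ v in (2 * c)..1, 8 * c / (v - c) ^ 2
        = (-8 * c / (1 - c)) - (-8 * c / (2 * c - c)) := by
      apply intervalIntegral.integral_eq_sub_of_hasDerivAt
        (f := fun v => -8 * c / (v - c))
      · intro v hv
        rw [uIcc_of_le hle] at hv
        have hvc : c < v := by have := hv.1; linarith
        have h0 : v - c ≠ 0 := by linarith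
        have h1 : HasDerivAt (fun v : ℝ => v - c) 1 v := by
          simpa using (hasDerivAt_id v).sub_const c
        have := (h1.inv h0).const_mul (-8 * c)
        convert this using 1
        · rfl
        · funext y; simp only [Pi.inv_apply]; ring
        · ring
      · apply ContinuousOn.intervalIntegrable
        rw [uIcc_of_le hle]
        exact hcont
    rw [hFTC]
    have h1 : -8 * c / (1 - c) ≤ 0 :=
      div_nonpos_of_nonpos_of_nonneg (by linarith) (by linarith)
    have h2 : -8 * c / (2 * c - c) = -8 := by
      rw [show 2 * c - c = c by ring]
      field_simp
    rw [h2]; linarith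
  · filter_upwards with v
    positivity


/-- **Uniform bound on Q(2x) (Zlatoš, proof of Lemma 2.1).**  There is a universal
constant C such that for all x ∈ [0,1/2]² with x ≠ 0,
∫_{Q(2x)} y₁x₂/(|x-y|²|x-ỹ|²) dy ≤ C, where ỹ = (-y₁,y₂). -/
theorem Q2x_kernel_integral_bound :
    ∃ C : ℝ, ∀ x : ℝ × ℝ,
      x ∈ Set.Icc ((0 : ℝ), (0 : ℝ)) ((1 / 2 : ℝ), (1 / 2 : ℝ)) → x ≠ (0, 0) →
      (∫⁻ y in Set.Icc (2 * x.1, 2 * x.2) ((1 : ℝ), (1 : ℝ)),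
          ENNReal.ofReal (y.1 * x.2 /
            (((x.1 - y.1) ^ 2 + (x.2 - y.2) ^ 2) *
              ((x.1 + y.1) ^ 2 + (x.2 - y.2) ^ 2)))) ≤ ENNReal.ofReal C := by
  refine ⟨8, fun x hx _ => ?_⟩
  simp only [Set.mem_Icc, Prod.le_def] at hx
  obtain ⟨⟨hx1, hx2⟩, hx1', hx2'⟩ := hx
  rcases eq_or_lt_of_le hx2 with h2 | h2
  · simp [← h2]
  -- main case : 0 < x.2
  have hG : Measurable fun y : ℝ × ℝ =>
      ENNReal.ofReal (16 * y.1 * x.2 / ((y.1 ^ 2 + (y.2 - x.2) ^ 2) ^ 2)) := by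
    measurability
  have step1 : (∫⁻ y in Set.Icc (2 * x.1, 2 * x.2) ((1 : ℝ), (1 : ℝ)),
        ENNReal.ofReal (y.1 * x.2 /
          (((x.1 - y.1) ^ 2 + (x.2 - y.2) ^ 2) *
            ((x.1 + y.1) ^ 2 + (x.2 - y.2) ^ 2))))
      ≤ ∫⁻ y in Set.Icc (2 * x.1, 2 * x.2) ((1 : ℝ), (1 : ℝ)),
        ENNReal.ofReal (16 * y.1 * x.2 / ((y.1 ^ 2 + (y.2 - x.2) ^ 2) ^ 2)) := by
    apply setLIntegral_mono' measurableSet_Icc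
    intro y hy
    simp only [Set.mem_Icc, Prod.le_def] at hy
    obtain ⟨⟨hy1, hy2⟩, hy1', hy2'⟩ := hy
    apply ENNReal.ofReal_le_ofReal
    have hy1p : 0 ≤ y.1 := by linarith
    have htp : 0 < y.2 - x.2 := by linarith
    have hD : 0 < y.1 ^ 2 + (y.2 - x.2) ^ 2 := by positivity
    have hA : (y.1 ^ 2 + (y.2 - x.2) ^ 2) / 4 ≤ (x.1 - y.1) ^ 2 + (x.2 - y.2) ^ 2 := by
      have hprod : (0:ℝ) ≤ (y.1 - 2 * x.1) * (3 * y.1 - 2 * x.1) :=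
        mul_nonneg (by linarith) (by linarith)
      nlinarith [hprod, sq_nonneg (x.2 - y.2 + (y.2 - x.2))]
    have hB : y.1 ^ 2 + (y.2 - x.2) ^ 2 ≤ (x.1 + y.1) ^ 2 + (x.2 - y.2) ^ 2 := by
      nlinarith [sq_nonneg x.1, mul_nonneg hx1 hy1p]
    have hAB : (y.1 ^ 2 + (y.2 - x.2) ^ 2) ^ 2 / 4 ≤
        ((x.1 - y.1) ^ 2 + (x.2 - y.2) ^ 2) * ((x.1 + y.1) ^ 2 + (x.2 - y.2) ^ 2) := by
      have h := mul_le_mul hA hB hD.le (le_trans (by positivity) hA)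
      calc (y.1 ^ 2 + (y.2 - x.2) ^ 2) ^ 2 / 4
          = (y.1 ^ 2 + (y.2 - x.2) ^ 2) / 4 * (y.1 ^ 2 + (y.2 - x.2) ^ 2) := by ring
        _ ≤ _ := h
    calc y.1 * x.2 / (((x.1 - y.1) ^ 2 + (x.2 - y.2) ^ 2) *
            ((x.1 + y.1) ^ 2 + (x.2 - y.2) ^ 2))
        ≤ (4 * (y.1 * x.2)) / ((y.1 ^ 2 + (y.2 - x.2) ^ 2) ^ 2 / 4) :=
          div_le_div₀ (by positivity) (by linarith [mul_nonneg hy1p hx2]) (by positivity) hAB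
      _ = 16 * y.1 * x.2 / ((y.1 ^ 2 + (y.2 - x.2) ^ 2) ^ 2) := by
          rw [div_div_eq_mul_div]; ring_nf
  refine le_trans step1 ?_
  have hsplit : Set.Icc ((2 * x.1, 2 * x.2) : ℝ × ℝ) (1, 1)
      = Set.Icc (2 * x.1) 1 ×ˢ Set.Icc (2 * x.2) 1 := Set.Icc_prod_eq _ _
  have step2 : (∫⁻ y in Set.Icc (2 * x.1, 2 * x.2) ((1 : ℝ), (1 : ℝ)),
        ENNReal.ofReal (16 * y.1 * x.2 / ((y.1 ^ 2 + (y.2 - x.2) ^ 2) ^ 2)))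
      = ∫⁻ v in Icc (2 * x.2) 1, ∫⁻ u in Icc (2 * x.1) 1,
          ENNReal.ofReal (16 * u * x.2 / ((u ^ 2 + (v - x.2) ^ 2) ^ 2)) := by
    rw [hsplit, Measure.volume_eq_prod, ← Measure.prod_restrict]
    exact lintegral_prod_symm _ hG.aemeasurable
  rw [step2]
  refine le_trans ?_ (outer_bound x.2 h2 hx2')
  apply setLIntegral_mono' measurableSet_Icc
  intro v hv
  exact inner_bound x.2 (v - x.2) (2 * x.1) hx2 (by linarith [hv.1]) (by linarith) (by linarith)


end
end

section
/- There is a universal constant C < ∞ such that for every x ∈ [0,1/2]² with x ≠ (0,0) and every y ∈ Q(2x) with y ≠ (0,0): | y₁ y₂ / ( |x−y|² |x−ỹ|² ) − y₁ y₂ / |y|⁴ | ≤ C |x| / |y|³, where Q(2x) := [2x₁,1] × [2x₂,1] and ỹ := (−y₁, y₂). -/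
open Set

noncomputable section

private lemma step35 (s t : ℝ) (hs0 : 0 ≤ s) (hst : s ≤ t) :
    t ^ 2 * (5 * (s * t) + 5 * (s * t)) + (5 * (s * t)) * (5 * (s * t)) ≤ 35 * (s * t ^ 3) := by
  nlinarith [mul_le_mul_of_nonneg_left (mul_le_mul_of_nonneg_right hst (sq_nonneg t)) hs0]

private lemma stepAB (A B t : ℝ) (hA : t ^ 2 / 4 ≤ A) (hB : t ^ 2 / 4 ≤ B) (hApos : 0 < A) :
    t ^ 4 / 16 ≤ A * B := by
  nlinarith [mul_le_mul hA hB (by positivity) hApos.le]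

private lemma stepuv (u v t : ℝ) (ht2 : t ^ 2 = u ^ 2 + v ^ 2) : u * v ≤ t ^ 2 := by
  nlinarith [sq_nonneg (u - v)]

private lemma stepfin (s t A B : ℝ) (hs0 : 0 ≤ s) (ht0 : 0 < t)
    (hABt : t ^ 4 / 16 ≤ A * B) :
    t ^ 2 * (35 * (s * t ^ 3)) * t ^ 3 ≤ 1024 * s * (A * B * t ^ 4) := by
  have h64 : s * (t ^ 4 / 16) * t ^ 4 ≤ s * (A * B) * t ^ 4 :=
    mul_le_mul_of_nonneg_right (mul_le_mul_of_nonneg_left hABt hs0) (by positivity)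
  nlinarith [h64, mul_nonneg hs0 (pow_nonneg ht0.le 8)]

private lemma kernel_core (p q u v s t : ℝ) (hp0 : 0 ≤ p) (hq0 : 0 ≤ q)
    (hup : 2 * p ≤ u) (hvq : 2 * q ≤ v) (hs0 : 0 ≤ s) (ht0 : 0 < t)
    (hs2 : s ^ 2 = p ^ 2 + q ^ 2) (ht2 : t ^ 2 = u ^ 2 + v ^ 2) :
    |u * v / (((p - u) ^ 2 + (q - v) ^ 2) * ((p + u) ^ 2 + (q - v) ^ 2)) -
        u * v / t ^ 4| ≤ 1024 * s / t ^ 3 := by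
  have hu0 : 0 ≤ u := by linarith
  have hv0 : 0 ≤ v := by linarith
  have hps : p ≤ s := by nlinarith [sq_nonneg q]
  have hqs : q ≤ s := by nlinarith [sq_nonneg p]
  have hut : u ≤ t := by nlinarith [sq_nonneg v]
  have hvt : v ≤ t := by nlinarith [sq_nonneg u]
  have hst : s ≤ t := by nlinarith [sq_nonneg u, sq_nonneg v]
  obtain ⟨A, hA_def⟩ : ∃ A : ℝ, A = (p - u) ^ 2 + (q - v) ^ 2 := ⟨_, rfl⟩
  obtain ⟨B, hB_def⟩ : ∃ B : ℝ, B = (p + u) ^ 2 + (q - v) ^ 2 := ⟨_, rfl⟩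
  rw [← hA_def, ← hB_def]
  have hA : t ^ 2 / 4 ≤ A := by
    rw [hA_def]
    nlinarith [mul_nonneg (by linarith : (0:ℝ) ≤ u / 2 - p) (by linarith : (0:ℝ) ≤ 3 * u / 2 - p),
      mul_nonneg (by linarith : (0:ℝ) ≤ v / 2 - q) (by linarith : (0:ℝ) ≤ 3 * v / 2 - q)]
  have hB : t ^ 2 / 4 ≤ B := by
    rw [hB_def]
    nlinarith [mul_nonneg hp0 hu0,
      mul_nonneg (by linarith : (0:ℝ) ≤ v / 2 - q) (by linarith : (0:ℝ) ≤ 3 * v / 2 - q)]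
  have ht24 : (0:ℝ) < t ^ 2 / 4 := by have := pow_pos ht0 2; linarith
  have hApos : 0 < A := lt_of_lt_of_le ht24 hA
  have hBpos : 0 < B := lt_of_lt_of_le ht24 hB
  have hst0 : (0:ℝ) ≤ s * t := mul_nonneg hs0 ht0.le
  have hss : s ^ 2 ≤ s * t := by nlinarith
  have hpu : p * u ≤ s * t := mul_le_mul hps hut hu0 hs0
  have hqv : q * v ≤ s * t := mul_le_mul hqs hvt hv0 hs0
  have hpu0 : 0 ≤ p * u := mul_nonneg hp0 hu0
  have hqv0 : 0 ≤ q * v := mul_nonneg hq0 hv0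
  have haA : A - t ^ 2 = s ^ 2 - 2 * (p * u) - 2 * (q * v) := by
    rw [hA_def, hs2, ht2]; ring
  have haB : B - t ^ 2 = s ^ 2 + 2 * (p * u) - 2 * (q * v) := by
    rw [hB_def, hs2, ht2]; ring
  have ha : |A - t ^ 2| ≤ 5 * (s * t) := by
    rw [abs_le, haA]; constructor <;> linarith [sq_nonneg s]
  have hb : |B - t ^ 2| ≤ 5 * (s * t) := by
    rw [abs_le, haB]; constructor <;> linarith [sq_nonneg s]
  have hab : |A * B - t ^ 4| ≤ 35 * (s * t ^ 3) := by
    have hdec : A * B - t ^ 4 = t ^ 2 * ((A - t ^ 2) + (B - t ^ 2)) + (A - t ^ 2) * (B - t ^ 2) := by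
      ring
    rw [hdec]
    calc |t ^ 2 * ((A - t ^ 2) + (B - t ^ 2)) + (A - t ^ 2) * (B - t ^ 2)|
        ≤ |t ^ 2 * ((A - t ^ 2) + (B - t ^ 2))| + |(A - t ^ 2) * (B - t ^ 2)| := abs_add_le _ _
      _ = t ^ 2 * |(A - t ^ 2) + (B - t ^ 2)| + |A - t ^ 2| * |B - t ^ 2| := by
          rw [abs_mul, abs_mul, abs_of_nonneg (by positivity : (0:ℝ) ≤ t ^ 2)]
      _ ≤ t ^ 2 * (|A - t ^ 2| + |B - t ^ 2|) + |A - t ^ 2| * |B - t ^ 2| :=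
          add_le_add_left
            (mul_le_mul_of_nonneg_left (abs_add_le _ _) (sq_nonneg t)) _
      _ ≤ t ^ 2 * (5 * (s * t) + 5 * (s * t)) + (5 * (s * t)) * (5 * (s * t)) :=
          add_le_add
            (mul_le_mul_of_nonneg_left (add_le_add ha hb) (sq_nonneg t))
            (mul_le_mul ha hb (abs_nonneg _) (by linarith [hst0]))
      _ ≤ 35 * (s * t ^ 3) := step35 s t hs0 hst
  have hABt : t ^ 4 / 16 ≤ A * B := stepAB A B t hA hB hApos
  have hABne : A * B ≠ 0 := (mul_pos hApos hBpos).ne'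
  have ht4ne : t ^ 4 ≠ 0 := (pow_pos ht0 4).ne'
  have hrw : u * v / (A * B) - u * v / t ^ 4 = u * v * (t ^ 4 - A * B) / (A * B * t ^ 4) := by
    field_simp
  have hden : (0:ℝ) < A * B * t ^ 4 := mul_pos (mul_pos hApos hBpos) (pow_pos ht0 4)
  rw [hrw, abs_div, abs_of_pos hden]
  rw [div_le_div_iff₀ hden (pow_pos ht0 3)]
  have huv : u * v ≤ t ^ 2 := stepuv u v t ht2
  have habs : |u * v * (t ^ 4 - A * B)| ≤ t ^ 2 * (35 * (s * t ^ 3)) := by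
    rw [abs_mul, abs_of_nonneg (mul_nonneg hu0 hv0), abs_sub_comm]
    exact mul_le_mul huv hab (abs_nonneg _) (sq_nonneg t)
  calc |u * v * (t ^ 4 - A * B)| * t ^ 3
      ≤ t ^ 2 * (35 * (s * t ^ 3)) * t ^ 3 :=
        mul_le_mul_of_nonneg_right habs (pow_nonneg ht0.le 3)
    _ ≤ 1024 * s * (A * B * t ^ 4) := stepfin s t A B hs0 ht0 hABt

/-- **Pointwise kernel comparison on Q(2x) (Zlatoš, proof of Lemma 2.1).**  There is a
universal constant C such that for all x ∈ [0,1/2]² with x ≠ 0 and all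
y ∈ Q(2x) = [2x₁,1]×[2x₂,1] with y ≠ 0,
| y₁y₂/(|x-y|²|x-ỹ|²) - y₁y₂/|y|⁴ | ≤ C|x|/|y|³, where ỹ = (-y₁,y₂). -/
theorem kernel_pointwise_comparison :
    ∃ C : ℝ, ∀ x y : ℝ × ℝ,
      x ∈ Set.Icc ((0 : ℝ), (0 : ℝ)) ((1 / 2 : ℝ), (1 / 2 : ℝ)) → x ≠ (0, 0) →
      y ∈ Set.Icc (2 * x.1, 2 * x.2) ((1 : ℝ), (1 : ℝ)) → y ≠ (0, 0) →
      |y.1 * y.2 /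
            (((x.1 - y.1) ^ 2 + (x.2 - y.2) ^ 2) *
              ((x.1 + y.1) ^ 2 + (x.2 - y.2) ^ 2)) -
          y.1 * y.2 / (y.1 ^ 2 + y.2 ^ 2) ^ 2| ≤
        C * Real.sqrt (x.1 ^ 2 + x.2 ^ 2) / Real.sqrt (y.1 ^ 2 + y.2 ^ 2) ^ 3 := by
  use 1024
  rintro ⟨p, q⟩ ⟨u, v⟩ hx _ hy hyne
  simp only [Set.mem_Icc, Prod.mk_le_mk] at hx hy
  obtain ⟨⟨hp0, hq0⟩, hp1, hq1⟩ := hx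
  obtain ⟨⟨hup, hvq⟩, hu1, hv1⟩ := hy
  dsimp only at *
  have hu0 : 0 ≤ u := by linarith
  have hv0 : 0 ≤ v := by linarith
  have hT : 0 < u ^ 2 + v ^ 2 := by
    rcases lt_or_eq_of_le (by positivity : (0:ℝ) ≤ u ^ 2 + v ^ 2) with h | h
    · exact h
    · exfalso
      apply hyne
      have hu2 : u ^ 2 = 0 := le_antisymm (by nlinarith [sq_nonneg v]) (sq_nonneg u)
      have hv2 : v ^ 2 = 0 := le_antisymm (by nlinarith [sq_nonneg u]) (sq_nonneg v)
      rw [pow_eq_zero_iff (two_ne_zero) |>.mp hu2, pow_eq_zero_iff (two_ne_zero) |>.mp hv2]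
  set s : ℝ := Real.sqrt (p ^ 2 + q ^ 2) with hs_def
  set t : ℝ := Real.sqrt (u ^ 2 + v ^ 2) with ht_def
  have hs2 : s ^ 2 = p ^ 2 + q ^ 2 := Real.sq_sqrt (by positivity)
  have ht2 : t ^ 2 = u ^ 2 + v ^ 2 := Real.sq_sqrt (by positivity)
  have hs0 : 0 ≤ s := Real.sqrt_nonneg _
  have ht0 : 0 < t := Real.sqrt_pos.mpr hT
  have hT2 : (u ^ 2 + v ^ 2) ^ 2 = t ^ 4 := by rw [← ht2]; ring
  rw [hT2]
  exact kernel_core p q u v s t hp0 hq0 hup hvq hs0 ht0 hs2 ht2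

end
end

section
/- There is a universal constant C < ∞ such that for every x ∈ [0,1/2]² with x ≠ (0,0): ∫_{Q(2x)} | y₁ y₂ / ( |x−y|² |x−ỹ|² ) − y₁ y₂ / |y|⁴ | dy ≤ C, where Q(2x) := [2x₁,1] × [2x₂,1] and ỹ := (−y₁, y₂). -/
open MeasureTheory Set

noncomputable section

private lemma sq_lower₁ (x y : ℝ) (hx : 0 ≤ x) (h : 2 * x ≤ y) :
    y ^ 2 / 4 ≤ (x - y) ^ 2 := by nlinarith [mul_nonneg (by linarith : (0:ℝ) ≤ y / 2 - x) (by linarith : (0:ℝ) ≤ 3 * y / 2 - x)]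

private lemma sq_lower₂ (x y : ℝ) (hx : 0 ≤ x) (hy : 0 ≤ y) :
    y ^ 2 / 4 ≤ (x + y) ^ 2 := by nlinarith [mul_nonneg hx hy, sq_nonneg x]

private lemma abs_A_sub (x₁ x₂ y₁ y₂ M : ℝ) (hx₁ : 0 ≤ x₁) (hx₂ : 0 ≤ x₂)
    (h₁ : 2 * x₁ ≤ y₁) (h₂ : 2 * x₂ ≤ y₂) (hM : 0 ≤ M)
    (hMy₁ : y₁ ≤ M) (hMy₂ : y₂ ≤ M) :
    |(x₁ - y₁) ^ 2 + (x₂ - y₂) ^ 2 - (y₁ ^ 2 + y₂ ^ 2)| ≤ 2 * ((x₁ + x₂) * M) := by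
  have hy₁ : 0 ≤ y₁ := by linarith
  have hy₂ : 0 ≤ y₂ := by linarith
  have p1 : x₁ * y₁ ≤ x₁ * M := mul_le_mul_of_nonneg_left hMy₁ hx₁
  have p2 : x₂ * y₂ ≤ x₂ * M := mul_le_mul_of_nonneg_left hMy₂ hx₂
  have p3 : x₁ * x₁ ≤ x₁ * y₁ := mul_le_mul_of_nonneg_left (by linarith) hx₁
  have p4 : x₂ * x₂ ≤ x₂ * y₂ := mul_le_mul_of_nonneg_left (by linarith) hx₂
  have q1 : 0 ≤ x₁ * y₁ := mul_nonneg hx₁ hy₁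
  have q2 : 0 ≤ x₂ * y₂ := mul_nonneg hx₂ hy₂
  have s1 : 0 ≤ x₁ * x₁ := mul_nonneg hx₁ hx₁
  have s2 : 0 ≤ x₂ * x₂ := mul_nonneg hx₂ hx₂
  rw [abs_le]
  constructor <;> nlinarith [p1, p2, p3, p4, q1, q2, s1, s2]

private lemma abs_B_sub (x₁ x₂ y₁ y₂ M : ℝ) (hx₁ : 0 ≤ x₁) (hx₂ : 0 ≤ x₂)
    (h₁ : 2 * x₁ ≤ y₁) (h₂ : 2 * x₂ ≤ y₂) (hM : 0 ≤ M)
    (hMy₁ : y₁ ≤ M) (hMy₂ : y₂ ≤ M) :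
    |(x₁ + y₁) ^ 2 + (x₂ - y₂) ^ 2 - (y₁ ^ 2 + y₂ ^ 2)| ≤ 3 * ((x₁ + x₂) * M) := by
  have hy₁ : 0 ≤ y₁ := by linarith
  have hy₂ : 0 ≤ y₂ := by linarith
  have p1 : x₁ * y₁ ≤ x₁ * M := mul_le_mul_of_nonneg_left hMy₁ hx₁
  have p2 : x₂ * y₂ ≤ x₂ * M := mul_le_mul_of_nonneg_left hMy₂ hx₂
  have p3 : x₁ * x₁ ≤ x₁ * y₁ := mul_le_mul_of_nonneg_left (by linarith) hx₁
  have p4 : x₂ * x₂ ≤ x₂ * y₂ := mul_le_mul_of_nonneg_left (by linarith) hx₂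
  have q1 : 0 ≤ x₁ * y₁ := mul_nonneg hx₁ hy₁
  have q2 : 0 ≤ x₂ * y₂ := mul_nonneg hx₂ hy₂
  have q3 : 0 ≤ x₁ * M := mul_nonneg hx₁ hM
  have q4 : 0 ≤ x₂ * M := mul_nonneg hx₂ hM
  have s1 : 0 ≤ x₁ * x₁ := mul_nonneg hx₁ hx₁
  have s2 : 0 ≤ x₂ * x₂ := mul_nonneg hx₂ hx₂
  rw [abs_le]
  constructor <;> nlinarith [p1, p2, p3, p4, q1, q2, q3, q4, s1, s2]

private lemma pointwise_bound (x₁ x₂ y₁ y₂ : ℝ) (hx₁ : 0 ≤ x₁) (hx₂ : 0 ≤ x₂)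
    (h₁ : 2 * x₁ ≤ y₁) (h₂ : 2 * x₂ ≤ y₂) :
    |y₁ * y₂ / (((x₁ - y₁) ^ 2 + (x₂ - y₂) ^ 2) * ((x₁ + y₁) ^ 2 + (x₂ - y₂) ^ 2)) -
        y₁ * y₂ / (y₁ ^ 2 + y₂ ^ 2) ^ 2| ≤
      96 * (x₁ / (y₁ * (y₁ ^ 2 + y₂ ^ 2)) + x₂ / (y₂ * (y₁ ^ 2 + y₂ ^ 2))) := by
  have hy₁ : 0 ≤ y₁ := le_trans (by linarith) h₁
  have hy₂ : 0 ≤ y₂ := le_trans (by linarith) h₂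
  rcases eq_or_lt_of_le hy₁ with h | hy₁p
  · rw [← h]
    simp
    positivity
  rcases eq_or_lt_of_le hy₂ with h | hy₂p
  · rw [← h]
    simp
    positivity
  have hx₁' : x₁ ≤ y₁ / 2 := by linarith
  have hx₂' : x₂ ≤ y₂ / 2 := by linarith
  set A := (x₁ - y₁) ^ 2 + (x₂ - y₂) ^ 2 with hAdef
  set B := (x₁ + y₁) ^ 2 + (x₂ - y₂) ^ 2 with hBdef
  set R := y₁ ^ 2 + y₂ ^ 2 with hRdef
  set M := max y₁ y₂ with hMdef
  set s := x₁ + x₂ with hsdef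
  have hR0 : 0 < R := by rw [hRdef]; positivity
  have hMy₁ : y₁ ≤ M := le_max_left _ _
  have hMy₂ : y₂ ≤ M := le_max_right _ _
  have hM0 : 0 < M := lt_of_lt_of_le hy₁p hMy₁
  have hM2 : M ^ 2 ≤ R := by
    rcases max_choice y₁ y₂ with h | h <;> rw [hMdef, h, hRdef]
    · linarith [sq_nonneg y₂]
    · linarith [sq_nonneg y₁]
  have hsM : s ≤ M := by rw [hsdef]; linarith
  have hs0 : 0 ≤ s := by rw [hsdef]; linarith
  have hA : R / 4 ≤ A := by
    have u1 := sq_lower₁ x₁ y₁ hx₁ h₁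
    have u2 := sq_lower₁ x₂ y₂ hx₂ h₂
    rw [hAdef, hRdef]; linarith
  have hB : R / 4 ≤ B := by
    have u1 := sq_lower₂ x₁ y₁ hx₁ hy₁
    have u2 := sq_lower₁ x₂ y₂ hx₂ h₂
    rw [hBdef, hRdef]; linarith
  have hA0 : 0 < A := lt_of_lt_of_le (by linarith) hA
  have hB0 : 0 < B := lt_of_lt_of_le (by linarith) hB
  have hu : |A - R| ≤ 2 * (s * M) := by
    rw [hAdef, hRdef, hsdef]
    exact abs_A_sub x₁ x₂ y₁ y₂ M hx₁ hx₂ h₁ h₂ hM0.le hMy₁ hMy₂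
  have hv : |B - R| ≤ 3 * (s * M) := by
    rw [hBdef, hRdef, hsdef]
    exact abs_B_sub x₁ x₂ y₁ y₂ M hx₁ hx₂ h₁ h₂ hM0.le hMy₁ hMy₂
  have hsMR : s * M * (s * M) ≤ s * M * R := by
    have w1 : s * M ≤ M * M := mul_le_mul_of_nonneg_right hsM hM0.le
    have w2 : M * M ≤ R := by linarith [hM2]
    have w3 : 0 ≤ s * M := mul_nonneg hs0 hM0.le
    exact mul_le_mul_of_nonneg_left (le_trans w1 w2) w3
  have hkey : |A * B - R ^ 2| ≤ 12 * (s * M) * R := by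
    have hid : A * B - R ^ 2 = R * ((A - R) + (B - R)) + (A - R) * (B - R) := by ring
    have t1 : |A * B - R ^ 2| ≤ |R * ((A - R) + (B - R))| + |(A - R) * (B - R)| := by
      rw [hid]; exact abs_add_le _ _
    have t2 : |R * ((A - R) + (B - R))| ≤ R * (|A - R| + |B - R|) := by
      rw [abs_mul, abs_of_pos hR0]
      exact mul_le_mul_of_nonneg_left (abs_add_le _ _) hR0.le
    have t3 : |(A - R) * (B - R)| ≤ (2 * (s * M)) * (3 * (s * M)) := by
      rw [abs_mul]
      exact mul_le_mul hu hv (abs_nonneg _) (by positivity)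
    have t4 : R * (|A - R| + |B - R|) ≤ R * (5 * (s * M)) :=
      mul_le_mul_of_nonneg_left (by linarith) hR0.le
    have hsMR0 : 0 ≤ s * M * R := mul_nonneg (mul_nonneg hs0 hM0.le) hR0.le
    linarith [t1, t2, t3, t4, hsMR, hsMR0]
  have hRne : R ≠ 0 := hR0.ne'
  have hAne : A ≠ 0 := hA0.ne'
  have hBne : B ≠ 0 := hB0.ne'
  have heq : y₁ * y₂ / (A * B) - y₁ * y₂ / R ^ 2 =
      y₁ * y₂ * (R ^ 2 - A * B) / (A * B * R ^ 2) := by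
    field_simp
  rw [heq, abs_div, abs_of_pos (by positivity : (0:ℝ) < A * B * R ^ 2), abs_mul,
    abs_of_nonneg (mul_nonneg hy₁ hy₂)]
  have hy12 : y₁ * y₂ ≤ R / 2 := by
    have := sq_nonneg (y₁ - y₂)
    rw [hRdef]; linarith [this]
  have h1 : y₁ * y₂ * |R ^ 2 - A * B| ≤ 6 * (s * M) * R ^ 2 := by
    have habs : |R ^ 2 - A * B| = |A * B - R ^ 2| := abs_sub_comm _ _
    have := mul_le_mul hy12 (habs ▸ hkey) (abs_nonneg _) (by positivity : (0:ℝ) ≤ R / 2)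
    calc y₁ * y₂ * |R ^ 2 - A * B| ≤ R / 2 * (12 * (s * M) * R) := this
      _ = 6 * (s * M) * R ^ 2 := by ring
  have h2 : R ^ 4 / 16 ≤ A * B * R ^ 2 := by
    have hAB : R / 4 * (R / 4) ≤ A * B := mul_le_mul hA hB (by linarith) hA0.le
    have := mul_le_mul_of_nonneg_right hAB (sq_nonneg R)
    calc R ^ 4 / 16 = R / 4 * (R / 4) * R ^ 2 := by ring
      _ ≤ A * B * R ^ 2 := this
  have step : y₁ * y₂ * |R ^ 2 - A * B| / (A * B * R ^ 2) ≤
      6 * (s * M) * R ^ 2 / (R ^ 4 / 16) :=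
    div_le_div₀ (by positivity) h1 (by positivity) h2
  have step2 : 6 * (s * M) * R ^ 2 / (R ^ 4 / 16) = 96 * (s * M) / R ^ 2 := by
    field_simp
    ring
  have hMy₁R : M * y₁ ≤ R := by
    have := mul_le_mul_of_nonneg_left hMy₁ hM0.le
    linarith [this, hM2]
  have hMy₂R : M * y₂ ≤ R := by
    have := mul_le_mul_of_nonneg_left hMy₂ hM0.le
    linarith [this, hM2]
  have e1 : x₁ * M / R ^ 2 ≤ x₁ / (y₁ * R) := by
    rw [div_le_div_iff₀ (by positivity) (by positivity)]
    have := mul_le_mul_of_nonneg_left hMy₁R (mul_nonneg hx₁ hR0.le)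
    linarith [this]
  have e2 : x₂ * M / R ^ 2 ≤ x₂ / (y₂ * R) := by
    rw [div_le_div_iff₀ (by positivity) (by positivity)]
    have := mul_le_mul_of_nonneg_left hMy₂R (mul_nonneg hx₂ hR0.le)
    linarith [this]
  have efin : 96 * (s * M) / R ^ 2 ≤ 96 * (x₁ / (y₁ * R) + x₂ / (y₂ * R)) := by
    have hexp : 96 * (s * M) / R ^ 2 =
        96 * (x₁ * M / R ^ 2) + 96 * (x₂ * M / R ^ 2) := by
      rw [hsdef]; ring
    rw [hexp]; linarith
  calc y₁ * y₂ * |R ^ 2 - A * B| / (A * B * R ^ 2)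
      ≤ 6 * (s * M) * R ^ 2 / (R ^ 4 / 16) := step
    _ = 96 * (s * M) / R ^ 2 := step2
    _ ≤ 96 * (x₁ / (y₁ * R) + x₂ / (y₂ * R)) := efin

private lemma real_inner_int (a : ℝ) (ha : 0 < a) :
    ∫ t in (0:ℝ)..1, 1 / (a ^ 2 + t ^ 2) = Real.arctan (1 / a) / a := by
  have key : ∀ t ∈ Set.uIcc (0:ℝ) 1,
      HasDerivAt (fun u => Real.arctan (u / a) / a) (1 / (a ^ 2 + t ^ 2)) t := by
    intro t _
    have h1 : HasDerivAt (fun u : ℝ => u / a) (1 / a) t := by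
      simpa using (hasDerivAt_id t).div_const a
    have h2 := (Real.hasDerivAt_arctan (t / a)).comp t h1
    have h3 := h2.div_const a
    refine h3.congr_deriv ?_
    have ha2 : a ^ 2 + t ^ 2 ≠ 0 := by positivity
    field_simp
  have hcont : IntervalIntegrable (fun t => 1 / (a ^ 2 + t ^ 2)) volume 0 1 := by
    apply Continuous.intervalIntegrable
    exact continuous_const.div (by fun_prop) (fun t => by positivity)
  have := intervalIntegral.integral_eq_sub_of_hasDerivAt key hcont
  simpa using this

private lemma lint_inner (a : ℝ) (ha : 0 < a) :
    ∫⁻ t in Icc (0:ℝ) 1, ENNReal.ofReal (1 / (a ^ 2 + t ^ 2)) ≤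
      ENNReal.ofReal (Real.pi / 2 / a) := by
  have hmeq : ∫⁻ t in Icc (0:ℝ) 1, ENNReal.ofReal (1 / (a ^ 2 + t ^ 2)) =
      ∫⁻ t in Ioc (0:ℝ) 1, ENNReal.ofReal (1 / (a ^ 2 + t ^ 2)) :=
    (setLIntegral_congr Ioc_ae_eq_Icc).symm
  rw [hmeq]
  have hint : IntegrableOn (fun t => 1 / (a ^ 2 + t ^ 2)) (Ioc (0:ℝ) 1) := by
    apply Continuous.integrableOn_Ioc
    exact continuous_const.div (by fun_prop) (fun t => by positivity)
  rw [← ofReal_integral_eq_lintegral_ofReal hint (ae_of_all _ fun t => by positivity)]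
  apply ENNReal.ofReal_le_ofReal
  rw [← intervalIntegral.integral_of_le (by norm_num : (0:ℝ) ≤ 1), real_inner_int a ha]
  have h := (Real.arctan_lt_pi_div_two (1 / a)).le
  gcongr

private lemma lint_outer (b c : ℝ) (hb : 0 < b) (hc : 0 ≤ c) :
    ∫⁻ t in Icc b 1, ENNReal.ofReal (c / t ^ 2) ≤ ENNReal.ofReal (c / b) := by
  rcases le_or_gt b 1 with hb1 | hb1
  · have key : ∀ t ∈ Set.uIcc b 1,
        HasDerivAt (fun u => -(c * u⁻¹)) (c / t ^ 2) t := by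
      intro t ht
      rw [Set.uIcc_of_le hb1] at ht
      have ht0 : t ≠ 0 := ne_of_gt (lt_of_lt_of_le hb ht.1)
      have h1 := ((hasDerivAt_inv ht0).const_mul c).neg
      refine h1.congr_deriv ?_
      field_simp
    have hconton : ContinuousOn (fun t : ℝ => c / t ^ 2) (Set.uIcc b 1) := by
      rw [Set.uIcc_of_le hb1]
      refine ContinuousOn.div continuousOn_const (by fun_prop) fun t ht => ?_
      exact pow_ne_zero _ (ne_of_gt (lt_of_lt_of_le hb ht.1))
    have hcont : IntervalIntegrable (fun t : ℝ => c / t ^ 2) volume b 1 :=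
      hconton.intervalIntegrable
    have hval := intervalIntegral.integral_eq_sub_of_hasDerivAt key hcont
    have hmeq : ∫⁻ t in Icc b 1, ENNReal.ofReal (c / t ^ 2) =
        ∫⁻ t in Ioc b 1, ENNReal.ofReal (c / t ^ 2) :=
      (setLIntegral_congr Ioc_ae_eq_Icc).symm
    rw [hmeq]
    have hint : IntegrableOn (fun t : ℝ => c / t ^ 2) (Ioc b 1) :=
      (intervalIntegrable_iff_integrableOn_Ioc_of_le hb1).mp hcont
    rw [← ofReal_integral_eq_lintegral_ofReal hint
      (ae_of_all _ fun t => by positivity)]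
    apply ENNReal.ofReal_le_ofReal
    rw [← intervalIntegral.integral_of_le hb1, hval]
    have hcb : 0 ≤ c / b := by positivity
    have : -(c * (1:ℝ)⁻¹) - -(c * b⁻¹) = c / b - c := by field_simp; ring
    rw [this]
    linarith
  · rw [Set.Icc_eq_empty hb1.not_ge]
    simp

private lemma inner_slice (c s : ℝ) (hc : 0 ≤ c) (hs : 0 < s) :
    ∫⁻ t in Icc (0:ℝ) 1, ENNReal.ofReal (c / (s * (s ^ 2 + t ^ 2))) ≤
      ENNReal.ofReal (c * Real.pi / 2 / s ^ 2) := by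
  calc ∫⁻ t in Icc (0:ℝ) 1, ENNReal.ofReal (c / (s * (s ^ 2 + t ^ 2)))
      = ∫⁻ t in Icc (0:ℝ) 1,
          ENNReal.ofReal (c / s) * ENNReal.ofReal (1 / (s ^ 2 + t ^ 2)) := by
        refine lintegral_congr fun t => ?_
        rw [← ENNReal.ofReal_mul (by positivity), div_mul_div_comm, mul_one]
    _ = ENNReal.ofReal (c / s) *
          ∫⁻ t in Icc (0:ℝ) 1, ENNReal.ofReal (1 / (s ^ 2 + t ^ 2)) := by
        apply lintegral_const_mul
        fun_prop
    _ ≤ ENNReal.ofReal (c / s) * ENNReal.ofReal (Real.pi / 2 / s) :=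
        mul_le_mul_right (lint_inner s hs) _
    _ = ENNReal.ofReal (c * Real.pi / 2 / s ^ 2) := by
        rw [← ENNReal.ofReal_mul (by positivity)]
        congr 1
        rw [div_div, div_mul_div_comm, div_div]
        ring_nf

private lemma term_bound (c b : ℝ) (hc : 0 ≤ c) (hb : 0 < b) :
    ∫⁻ p : ℝ × ℝ in Icc b 1 ×ˢ Icc (0:ℝ) 1,
      ENNReal.ofReal (c / (p.1 * (p.1 ^ 2 + p.2 ^ 2))) ≤
      ENNReal.ofReal (c * Real.pi / 2 / b) := by
  have hf : Measurable fun p : ℝ × ℝ =>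
      ENNReal.ofReal (c / (p.1 * (p.1 ^ 2 + p.2 ^ 2))) := by fun_prop
  rw [Measure.volume_eq_prod, ← Measure.prod_restrict, lintegral_prod _ hf.aemeasurable]
  calc ∫⁻ s in Icc b 1, ∫⁻ t in Icc (0:ℝ) 1,
        ENNReal.ofReal (c / (s * (s ^ 2 + t ^ 2)))
      ≤ ∫⁻ s in Icc b 1, ENNReal.ofReal (c * Real.pi / 2 / s ^ 2) := by
        refine setLIntegral_mono (by fun_prop) fun s hs => ?_
        exact inner_slice c s hc (lt_of_lt_of_le hb hs.1)
    _ ≤ ENNReal.ofReal (c * Real.pi / 2 / b) :=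
        lint_outer b (c * Real.pi / 2) hb (by positivity)

private lemma term_bound' (c b : ℝ) (hc : 0 ≤ c) (hb : 0 < b) :
    ∫⁻ p : ℝ × ℝ in Icc (0:ℝ) 1 ×ˢ Icc b 1,
      ENNReal.ofReal (c / (p.2 * (p.1 ^ 2 + p.2 ^ 2))) ≤
      ENNReal.ofReal (c * Real.pi / 2 / b) := by
  have hf : Measurable fun p : ℝ × ℝ =>
      ENNReal.ofReal (c / (p.2 * (p.1 ^ 2 + p.2 ^ 2))) := by fun_prop
  rw [Measure.volume_eq_prod, ← Measure.prod_restrict, lintegral_prod_symm _ hf.aemeasurable]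
  calc ∫⁻ s in Icc b 1, ∫⁻ t in Icc (0:ℝ) 1,
        ENNReal.ofReal (c / (s * (t ^ 2 + s ^ 2)))
      ≤ ∫⁻ s in Icc b 1, ENNReal.ofReal (c * Real.pi / 2 / s ^ 2) := by
        refine setLIntegral_mono (by fun_prop) fun s hs => ?_
        have := inner_slice c s hc (lt_of_lt_of_le hb hs.1)
        refine le_trans (le_of_eq ?_) this
        exact lintegral_congr fun t => by rw [add_comm (t ^ 2)]
    _ ≤ ENNReal.ofReal (c * Real.pi / 2 / b) :=
        lint_outer b (c * Real.pi / 2) hb (by positivity)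

/-- **Integrated kernel comparison on Q(2x) (Zlatoš, proof of Lemma 2.1).**  There is a
universal constant C such that for all x ∈ [0,1/2]² with x ≠ 0,
∫_{Q(2x)} | y₁y₂/(|x-y|²|x-ỹ|²) - y₁y₂/|y|⁴ | dy ≤ C, where ỹ = (-y₁,y₂). -/
theorem kernel_comparison_integral_bound :
    ∃ C : ℝ, ∀ x : ℝ × ℝ,
      x ∈ Set.Icc ((0 : ℝ), (0 : ℝ)) ((1 / 2 : ℝ), (1 / 2 : ℝ)) → x ≠ (0, 0) →
      (∫⁻ y in Set.Icc (2 * x.1, 2 * x.2) ((1 : ℝ), (1 : ℝ)),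
          ENNReal.ofReal
            |y.1 * y.2 /
                (((x.1 - y.1) ^ 2 + (x.2 - y.2) ^ 2) *
                  ((x.1 + y.1) ^ 2 + (x.2 - y.2) ^ 2)) -
              y.1 * y.2 / (y.1 ^ 2 + y.2 ^ 2) ^ 2|) ≤ ENNReal.ofReal C := by
  use 48 * Real.pi
  intro x hx _
  have hx1 : 0 ≤ x.1 := (Prod.le_def.1 hx.1).1
  have hx2 : 0 ≤ x.2 := (Prod.le_def.1 hx.1).2
  set Q : Set (ℝ × ℝ) := Set.Icc (2 * x.1, 2 * x.2) ((1 : ℝ), (1 : ℝ)) with hQdef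
  have hg1m : Measurable fun y : ℝ × ℝ =>
      ENNReal.ofReal (96 * x.1 / (y.1 * (y.1 ^ 2 + y.2 ^ 2))) := by fun_prop
  have hg2m : Measurable fun y : ℝ × ℝ =>
      ENNReal.ofReal (96 * x.2 / (y.2 * (y.1 ^ 2 + y.2 ^ 2))) := by fun_prop
  have step1 : (∫⁻ y in Q, ENNReal.ofReal
        |y.1 * y.2 / (((x.1 - y.1) ^ 2 + (x.2 - y.2) ^ 2) *
            ((x.1 + y.1) ^ 2 + (x.2 - y.2) ^ 2)) -
          y.1 * y.2 / (y.1 ^ 2 + y.2 ^ 2) ^ 2|) ≤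
      ∫⁻ y in Q, (ENNReal.ofReal (96 * x.1 / (y.1 * (y.1 ^ 2 + y.2 ^ 2))) +
        ENNReal.ofReal (96 * x.2 / (y.2 * (y.1 ^ 2 + y.2 ^ 2)))) := by
    refine setLIntegral_mono (hg1m.add hg2m) fun y hy => ?_
    have hy1 : 2 * x.1 ≤ y.1 := (Prod.le_def.1 hy.1).1
    have hy2 : 2 * x.2 ≤ y.2 := (Prod.le_def.1 hy.1).2
    refine le_trans (ENNReal.ofReal_le_ofReal
      (pointwise_bound x.1 x.2 y.1 y.2 hx1 hx2 hy1 hy2)) ?_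
    rw [mul_add, ← mul_div_assoc, ← mul_div_assoc]
    exact ENNReal.ofReal_add_le
  have step2 : (∫⁻ y in Q, (ENNReal.ofReal (96 * x.1 / (y.1 * (y.1 ^ 2 + y.2 ^ 2))) +
        ENNReal.ofReal (96 * x.2 / (y.2 * (y.1 ^ 2 + y.2 ^ 2))))) =
      (∫⁻ y in Q, ENNReal.ofReal (96 * x.1 / (y.1 * (y.1 ^ 2 + y.2 ^ 2)))) +
        ∫⁻ y in Q, ENNReal.ofReal (96 * x.2 / (y.2 * (y.1 ^ 2 + y.2 ^ 2))) :=
    lintegral_add_left hg1m _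
  have hQ1 : Q ⊆ Icc (2 * x.1) 1 ×ˢ Icc (0:ℝ) 1 := by
    rw [hQdef, Icc_prod_eq]
    exact Set.prod_mono subset_rfl (Icc_subset_Icc (by dsimp only; linarith) le_rfl)
  have hQ2 : Q ⊆ Icc (0:ℝ) 1 ×ˢ Icc (2 * x.2) 1 := by
    rw [hQdef, Icc_prod_eq]
    exact Set.prod_mono (Icc_subset_Icc (by dsimp only; linarith) le_rfl) subset_rfl
  have t1 : (∫⁻ y in Q, ENNReal.ofReal (96 * x.1 / (y.1 * (y.1 ^ 2 + y.2 ^ 2)))) ≤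
      ENNReal.ofReal (24 * Real.pi) := by
    rcases eq_or_lt_of_le hx1 with h | h
    · simp [← h]
    · refine le_trans (lintegral_mono_set hQ1) ?_
      refine le_trans (term_bound (96 * x.1) (2 * x.1) (by positivity) (by positivity)) ?_
      apply ENNReal.ofReal_le_ofReal
      rw [div_le_iff₀ (by positivity)]
      ring_nf
      nlinarith [Real.pi_pos, h]
  have t2 : (∫⁻ y in Q, ENNReal.ofReal (96 * x.2 / (y.2 * (y.1 ^ 2 + y.2 ^ 2)))) ≤
      ENNReal.ofReal (24 * Real.pi) := by
    rcases eq_or_lt_of_le hx2 with h | h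
    · simp [← h]
    · refine le_trans (lintegral_mono_set hQ2) ?_
      refine le_trans (term_bound' (96 * x.2) (2 * x.2) (by positivity) (by positivity)) ?_
      apply ENNReal.ofReal_le_ofReal
      rw [div_le_iff₀ (by positivity)]
      ring_nf
      nlinarith [Real.pi_pos, h]
  calc (∫⁻ y in Q, ENNReal.ofReal
        |y.1 * y.2 / (((x.1 - y.1) ^ 2 + (x.2 - y.2) ^ 2) *
            ((x.1 + y.1) ^ 2 + (x.2 - y.2) ^ 2)) -
          y.1 * y.2 / (y.1 ^ 2 + y.2 ^ 2) ^ 2|)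
      ≤ _ := step1
    _ = _ := step2
    _ ≤ ENNReal.ofReal (24 * Real.pi) + ENNReal.ofReal (24 * Real.pi) := add_le_add t1 t2
    _ = ENNReal.ofReal (48 * Real.pi) := by
        rw [← ENNReal.ofReal_add (by positivity) (by positivity)]
        ring_nf

end
end

section
/- For every x₁ ∈ (0, 1/2]: ∫₀^{x₁} ∫₀^1 x₁ z₂ / ( (z₁² + z₂²)(x₁² + z₂²) ) dz₂ dz₁ ≤ π²/4. -/
set_option maxHeartbeats 1000000

open MeasureTheory Set

noncomputable section

lemma integral_inv_sq_add_sq_aux (b c : ℝ) (hc : 0 < c) :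
    ∫ z in (0:ℝ)..b, (z ^ 2 + c ^ 2)⁻¹ = c⁻¹ * Real.arctan (b / c) := by
  have hc' : c ≠ 0 := hc.ne'
  have h1 : ∀ z : ℝ, (z ^ 2 + c ^ 2)⁻¹ = (c ^ 2)⁻¹ * (1 + (z / c) ^ 2)⁻¹ := by
    intro z
    rw [← mul_inv, mul_add, mul_one, div_pow, mul_div_cancel₀ _ (pow_ne_zero 2 hc'), add_comm]
  calc ∫ z in (0:ℝ)..b, (z ^ 2 + c ^ 2)⁻¹
      = ∫ z in (0:ℝ)..b, (c ^ 2)⁻¹ * (1 + (z / c) ^ 2)⁻¹ := by simp_rw [h1]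
    _ = (c ^ 2)⁻¹ * ∫ z in (0:ℝ)..b, (1 + (z / c) ^ 2)⁻¹ :=
        intervalIntegral.integral_const_mul _ _
    _ = (c ^ 2)⁻¹ * (c * ∫ u in (0 / c)..(b / c), (1 + u ^ 2)⁻¹) := by
        rw [intervalIntegral.integral_comp_div (fun u => (1 + u ^ 2)⁻¹) hc', smul_eq_mul]
    _ = c⁻¹ * Real.arctan (b / c) := by
        rw [integral_inv_one_add_sq]
        simp only [zero_div, Real.arctan_zero, sub_zero]
        field_simp

/-- **Elementary integral bound (Zlatoš, proof of Lemma 2.1).**  For x₁ ∈ (0,1/2],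
∫₀^{x₁} ∫₀^1 x₁z₂/((z₁²+z₂²)(x₁²+z₂²)) dz₂ dz₁ ≤ π²/4. -/
theorem strip_integral_bound (x₁ : ℝ) (hx₁ : x₁ ∈ Set.Ioc (0 : ℝ) (1 / 2)) :
    (∫⁻ z₁ in Set.Icc (0 : ℝ) x₁, ∫⁻ z₂ in Set.Icc (0 : ℝ) 1,
        ENNReal.ofReal (x₁ * z₂ / ((z₁ ^ 2 + z₂ ^ 2) * (x₁ ^ 2 + z₂ ^ 2)))) ≤
      ENNReal.ofReal (Real.pi ^ 2 / 4) := by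
  obtain ⟨hx0, hx2⟩ := hx₁
  have hmeas : AEMeasurable
      (Function.uncurry fun z₁ z₂ : ℝ =>
        ENNReal.ofReal (x₁ * z₂ / ((z₁ ^ 2 + z₂ ^ 2) * (x₁ ^ 2 + z₂ ^ 2))))
      ((volume.restrict (Icc (0:ℝ) x₁)).prod (volume.restrict (Icc (0:ℝ) 1))) := by
    apply Measurable.aemeasurable
    apply Measurable.ennreal_ofReal
    measurability
  calc (∫⁻ z₁ in Icc (0:ℝ) x₁, ∫⁻ z₂ in Icc (0:ℝ) 1,
          ENNReal.ofReal (x₁ * z₂ / ((z₁ ^ 2 + z₂ ^ 2) * (x₁ ^ 2 + z₂ ^ 2))))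
      = ∫⁻ z₂ in Icc (0:ℝ) 1, ∫⁻ z₁ in Icc (0:ℝ) x₁,
          ENNReal.ofReal (x₁ * z₂ / ((z₁ ^ 2 + z₂ ^ 2) * (x₁ ^ 2 + z₂ ^ 2))) :=
        lintegral_lintegral_swap hmeas
    _ = ∫⁻ z₂ in Ioc (0:ℝ) 1, ∫⁻ z₁ in Icc (0:ℝ) x₁,
          ENNReal.ofReal (x₁ * z₂ / ((z₁ ^ 2 + z₂ ^ 2) * (x₁ ^ 2 + z₂ ^ 2))) :=
        (setLIntegral_congr Ioc_ae_eq_Icc).symm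
    _ ≤ ∫⁻ z₂ in Ioc (0:ℝ) 1,
          ENNReal.ofReal (Real.pi / 2 * (x₁ / (x₁ ^ 2 + z₂ ^ 2))) := by
        apply lintegral_mono_ae
        filter_upwards [ae_restrict_mem measurableSet_Ioc] with z₂ hz₂
        have hz0 : 0 < z₂ := hz₂.1
        have hB : 0 < x₁ ^ 2 + z₂ ^ 2 := by positivity
        have hcont : Continuous fun z₁ : ℝ =>
            x₁ * z₂ / ((z₁ ^ 2 + z₂ ^ 2) * (x₁ ^ 2 + z₂ ^ 2)) := by
          apply Continuous.div (by fun_prop) (by fun_prop)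
          intro z₁
          have : 0 < z₁ ^ 2 + z₂ ^ 2 := by positivity
          positivity
        have hint : IntegrableOn
            (fun z₁ : ℝ => x₁ * z₂ / ((z₁ ^ 2 + z₂ ^ 2) * (x₁ ^ 2 + z₂ ^ 2)))
            (Icc 0 x₁) := hcont.integrableOn_Icc
        have hnn : 0 ≤ᵐ[volume.restrict (Icc (0:ℝ) x₁)]
            fun z₁ : ℝ => x₁ * z₂ / ((z₁ ^ 2 + z₂ ^ 2) * (x₁ ^ 2 + z₂ ^ 2)) := by
          filter_upwards with z₁
          have : 0 < z₁ ^ 2 + z₂ ^ 2 := by positivity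
          positivity
        rw [← ofReal_integral_eq_lintegral_ofReal hint hnn]
        apply ENNReal.ofReal_le_ofReal
        have hrew : ∀ z₁ : ℝ, x₁ * z₂ / ((z₁ ^ 2 + z₂ ^ 2) * (x₁ ^ 2 + z₂ ^ 2))
            = x₁ * z₂ / (x₁ ^ 2 + z₂ ^ 2) * (z₁ ^ 2 + z₂ ^ 2)⁻¹ := by
          intro z₁
          rw [mul_comm (z₁ ^ 2 + z₂ ^ 2), div_mul_eq_div_div, div_eq_mul_inv]
        calc (∫ z₁ in Icc (0:ℝ) x₁, x₁ * z₂ / ((z₁ ^ 2 + z₂ ^ 2) * (x₁ ^ 2 + z₂ ^ 2)))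
            = ∫ z₁ in (0:ℝ)..x₁, x₁ * z₂ / ((z₁ ^ 2 + z₂ ^ 2) * (x₁ ^ 2 + z₂ ^ 2)) := by
              rw [integral_Icc_eq_integral_Ioc, ← intervalIntegral.integral_of_le hx0.le]
          _ = x₁ * z₂ / (x₁ ^ 2 + z₂ ^ 2) * ∫ z₁ in (0:ℝ)..x₁, (z₁ ^ 2 + z₂ ^ 2)⁻¹ := by
              simp_rw [hrew]
              exact intervalIntegral.integral_const_mul _ _
          _ = x₁ * z₂ / (x₁ ^ 2 + z₂ ^ 2) * (z₂⁻¹ * Real.arctan (x₁ / z₂)) := by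
              rw [integral_inv_sq_add_sq_aux x₁ z₂ hz0]
          _ = x₁ / (x₁ ^ 2 + z₂ ^ 2) * Real.arctan (x₁ / z₂) := by
              field_simp
          _ ≤ Real.pi / 2 * (x₁ / (x₁ ^ 2 + z₂ ^ 2)) := by
              rw [mul_comm (Real.pi / 2)]
              apply mul_le_mul_of_nonneg_left (Real.arctan_lt_pi_div_two _).le
              positivity
    _ ≤ ENNReal.ofReal (Real.pi ^ 2 / 4) := by
        have hB : ∀ z₂ : ℝ, 0 < x₁ ^ 2 + z₂ ^ 2 := fun z₂ => by positivity
        have hcont : Continuous fun z₂ : ℝ => Real.pi / 2 * (x₁ / (x₁ ^ 2 + z₂ ^ 2)) := by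
          apply Continuous.mul continuous_const
          exact Continuous.div continuous_const (by fun_prop) fun z₂ => (hB z₂).ne'
        have hint : IntegrableOn
            (fun z₂ : ℝ => Real.pi / 2 * (x₁ / (x₁ ^ 2 + z₂ ^ 2))) (Ioc 0 1) :=
          (hcont.integrableOn_Icc (a := 0) (b := 1)).mono_set Ioc_subset_Icc_self
        have hnn : 0 ≤ᵐ[volume.restrict (Ioc (0:ℝ) 1)]
            fun z₂ : ℝ => Real.pi / 2 * (x₁ / (x₁ ^ 2 + z₂ ^ 2)) := by
          filter_upwards with z₂
          have := hB z₂
          have := Real.pi_pos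
          positivity
        rw [← ofReal_integral_eq_lintegral_ofReal hint hnn]
        apply ENNReal.ofReal_le_ofReal
        have hrew : ∀ z₂ : ℝ, Real.pi / 2 * (x₁ / (x₁ ^ 2 + z₂ ^ 2))
            = Real.pi / 2 * x₁ * (z₂ ^ 2 + x₁ ^ 2)⁻¹ := by
          intro z₂
          rw [add_comm (z₂ ^ 2), mul_assoc, div_eq_mul_inv]
          ring
        calc (∫ z₂ in Ioc (0:ℝ) 1, Real.pi / 2 * (x₁ / (x₁ ^ 2 + z₂ ^ 2)))
            = ∫ z₂ in (0:ℝ)..1, Real.pi / 2 * (x₁ / (x₁ ^ 2 + z₂ ^ 2)) := by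
              rw [← intervalIntegral.integral_of_le (by norm_num : (0:ℝ) ≤ 1)]
          _ = Real.pi / 2 * x₁ * ∫ z₂ in (0:ℝ)..1, (z₂ ^ 2 + x₁ ^ 2)⁻¹ := by
              simp_rw [hrew]
              exact intervalIntegral.integral_const_mul _ _
          _ = Real.pi / 2 * x₁ * (x₁⁻¹ * Real.arctan (1 / x₁)) := by
              rw [integral_inv_sq_add_sq_aux 1 x₁ hx0]
          _ = Real.pi / 2 * Real.arctan (1 / x₁) := by
              field_simp
          _ ≤ Real.pi / 2 * (Real.pi / 2) := by
              apply mul_le_mul_of_nonneg_left (Real.arctan_lt_pi_div_two _).le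
              positivity
          _ = Real.pi ^ 2 / 4 := by ring

end
end

section
/- For all real numbers x₁, x₂ with 0 < x₁ ≤ 1 and 0 < x₂: ∫_{x₁}^1 ∫₀^{x₂} z₁ z₂ / (z₁² + z₂²)² dz₂ dz₁ ≤ log( 1 + x₂/x₁ ). -/
open MeasureTheory Set

noncomputable section

/-- Inner integral evaluation. -/
lemma corner_inner_eval (z₁ x₂ : ℝ) (hz₁ : 0 < z₁) (hx₂ : 0 < x₂) :
    (∫⁻ z₂ in Set.Icc (0 : ℝ) x₂,
        ENNReal.ofReal (z₁ * z₂ / (z₁ ^ 2 + z₂ ^ 2) ^ 2)) =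
      ENNReal.ofReal (z₁ / 2 * (1 / z₁ ^ 2 - 1 / (z₁ ^ 2 + x₂ ^ 2))) := by
  have hcont : Continuous (fun z₂ : ℝ => z₁ * z₂ / (z₁ ^ 2 + z₂ ^ 2) ^ 2) := by
    apply Continuous.div (by continuity) (by continuity)
    intro z₂; positivity
  have hint : IntegrableOn (fun z₂ : ℝ => z₁ * z₂ / (z₁ ^ 2 + z₂ ^ 2) ^ 2)
      (Set.Ioc (0 : ℝ) x₂) := hcont.integrableOn_Ioc
  rw [← Measure.restrict_congr_set Ioc_ae_eq_Icc,
    ← ofReal_integral_eq_lintegral_ofReal hint ?_]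
  · congr 1
    rw [← intervalIntegral.integral_of_le hx₂.le]
    have hderiv : ∀ z₂ ∈ Set.uIcc (0 : ℝ) x₂,
        HasDerivAt (fun z₂ : ℝ => -(z₁ / 2) * (z₁ ^ 2 + z₂ ^ 2)⁻¹)
          (z₁ * z₂ / (z₁ ^ 2 + z₂ ^ 2) ^ 2) z₂ := by
      intro z₂ _
      have hne : z₁ ^ 2 + z₂ ^ 2 ≠ 0 := by positivity
      have h1 : HasDerivAt (fun z₂ : ℝ => z₁ ^ 2 + z₂ ^ 2) (2 * z₂) z₂ := by
        simpa using (hasDerivAt_pow 2 z₂).const_add (z₁ ^ 2)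
      have := (h1.inv hne).const_mul (-(z₁ / 2))
      refine this.congr_deriv ?_
      field_simp
    rw [intervalIntegral.integral_eq_sub_of_hasDerivAt hderiv
      (hcont.intervalIntegrable _ _)]
    field_simp
    ring
  · rw [Filter.EventuallyLE, ae_restrict_iff' measurableSet_Ioc]
    filter_upwards with z₂ hz₂
    have := hz₂.1
    positivity

/-- **Elementary integral bound (Zlatoš, proof of Lemma 2.1).**  For 0 < x₁ ≤ 1 and
0 < x₂, ∫_{x₁}^1 ∫₀^{x₂} z₁z₂/(z₁²+z₂²)² dz₂ dz₁ ≤ log(1 + x₂/x₁). -/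
theorem corner_integral_log_bound (x₁ x₂ : ℝ) (hx₁ : 0 < x₁) (hx₁' : x₁ ≤ 1)
    (hx₂ : 0 < x₂) :
    (∫⁻ z₁ in Set.Icc x₁ 1, ∫⁻ z₂ in Set.Icc (0 : ℝ) x₂,
        ENNReal.ofReal (z₁ * z₂ / (z₁ ^ 2 + z₂ ^ 2) ^ 2)) ≤
      ENNReal.ofReal (Real.log (1 + x₂ / x₁)) := by
  set g : ℝ → ℝ := fun z₁ => z₁ / 2 * (1 / z₁ ^ 2 - 1 / (z₁ ^ 2 + x₂ ^ 2)) with hg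
  have hstep1 : (∫⁻ z₁ in Set.Icc x₁ 1, ∫⁻ z₂ in Set.Icc (0 : ℝ) x₂,
      ENNReal.ofReal (z₁ * z₂ / (z₁ ^ 2 + z₂ ^ 2) ^ 2)) =
      ∫⁻ z₁ in Set.Icc x₁ 1, ENNReal.ofReal (g z₁) := by
    apply setLIntegral_congr_fun measurableSet_Icc
    intro z₁ hz₁
    exact corner_inner_eval z₁ x₂ (lt_of_lt_of_le hx₁ hz₁.1) hx₂
  rw [hstep1]
  have hgcont : ContinuousOn g (Set.Icc x₁ 1) := by
    apply ContinuousOn.mul (by fun_prop)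
    apply ContinuousOn.sub
    · apply ContinuousOn.div continuousOn_const (by fun_prop)
      intro z hz
      have : 0 < z := lt_of_lt_of_le hx₁ hz.1
      positivity
    · apply ContinuousOn.div continuousOn_const (by fun_prop)
      intro z hz; positivity
  have hgint : IntegrableOn g (Set.Ioc x₁ 1) :=
    (hgcont.integrableOn_Icc).mono_set Set.Ioc_subset_Icc_self
  have hgnn : ∀ z ∈ Set.Icc x₁ 1, 0 ≤ g z := by
    intro z hz
    have hz0 : 0 < z := lt_of_lt_of_le hx₁ hz.1
    have h1 : 1 / (z ^ 2 + x₂ ^ 2) ≤ 1 / z ^ 2 := by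
      apply one_div_le_one_div_of_le (by positivity)
      nlinarith
    have : 0 ≤ 1 / z ^ 2 - 1 / (z ^ 2 + x₂ ^ 2) := by linarith
    positivity
  have hstep2 : (∫⁻ z₁ in Set.Icc x₁ 1, ENNReal.ofReal (g z₁)) =
      ENNReal.ofReal (1 / 4 * Real.log (1 ^ 2 / (1 ^ 2 + x₂ ^ 2)) -
        1 / 4 * Real.log (x₁ ^ 2 / (x₁ ^ 2 + x₂ ^ 2))) := by
    rw [← Measure.restrict_congr_set Ioc_ae_eq_Icc,
      ← ofReal_integral_eq_lintegral_ofReal hgint ?_]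
    · congr 1
      rw [← intervalIntegral.integral_of_le hx₁']
      have hderiv : ∀ z ∈ Set.uIcc x₁ 1,
          HasDerivAt (fun z : ℝ => 1 / 4 * Real.log (z ^ 2 / (z ^ 2 + x₂ ^ 2)))
            (g z) z := by
        intro z hz
        rw [Set.uIcc_of_le hx₁'] at hz
        have hz0 : 0 < z := lt_of_lt_of_le hx₁ hz.1
        have hne : z ^ 2 + x₂ ^ 2 ≠ 0 := by positivity
        have h1 : HasDerivAt (fun z : ℝ => z ^ 2 / (z ^ 2 + x₂ ^ 2))
            ((2 * z * (z ^ 2 + x₂ ^ 2) - z ^ 2 * (2 * z)) / (z ^ 2 + x₂ ^ 2) ^ 2) z := by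
          have hp : HasDerivAt (fun z : ℝ => z ^ 2) (2 * z) z := by
            simpa using hasDerivAt_pow 2 z
          have hq : HasDerivAt (fun z : ℝ => z ^ 2 + x₂ ^ 2) (2 * z) z := by
            simpa using hp.add_const (x₂ ^ 2)
          exact hp.div hq hne
        have harg : z ^ 2 / (z ^ 2 + x₂ ^ 2) ≠ 0 := by positivity
        have := (h1.log harg).const_mul (1 / 4 : ℝ)
        refine this.congr_deriv ?_
        rw [hg]
        field_simp
        ring
      rw [intervalIntegral.integral_eq_sub_of_hasDerivAt hderiv
        ((hgcont.mono (by rw [Set.uIcc_of_le hx₁'])).intervalIntegrable)]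
    · rw [Filter.EventuallyLE, ae_restrict_iff' measurableSet_Ioc]
      filter_upwards with z hz
      exact hgnn z (Set.Ioc_subset_Icc_self hz)
  rw [hstep2]
  apply ENNReal.ofReal_le_ofReal
  -- real inequality
  have hB : (1 : ℝ) ≤ 1 + x₂ / x₁ := by
    have : 0 < x₂ / x₁ := by positivity
    linarith
  have hlogB : 0 ≤ Real.log (1 + x₂ / x₁) := Real.log_nonneg hB
  have h1 : Real.log (1 ^ 2 / (1 ^ 2 + x₂ ^ 2)) ≤ 0 := by
    apply Real.log_nonpos (by positivity)
    rw [div_le_one (by positivity)]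
    nlinarith
  have h2 : -Real.log (x₁ ^ 2 / (x₁ ^ 2 + x₂ ^ 2)) = Real.log ((x₁ ^ 2 + x₂ ^ 2) / x₁ ^ 2) := by
    rw [← Real.log_inv]
    congr 1
    field_simp
  have h3 : Real.log ((x₁ ^ 2 + x₂ ^ 2) / x₁ ^ 2) ≤ 2 * Real.log (1 + x₂ / x₁) := by
    have heq : (1 + x₂ / x₁) ^ 2 = (x₁ + x₂) ^ 2 / x₁ ^ 2 := by
      field_simp
    have hle : (x₁ ^ 2 + x₂ ^ 2) / x₁ ^ 2 ≤ (x₁ + x₂) ^ 2 / x₁ ^ 2 := by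
      gcongr
      nlinarith
    calc Real.log ((x₁ ^ 2 + x₂ ^ 2) / x₁ ^ 2) ≤ Real.log ((x₁ + x₂) ^ 2 / x₁ ^ 2) :=
          Real.log_le_log (by positivity) hle
      _ = Real.log ((1 + x₂ / x₁) ^ 2) := by rw [heq]
      _ = 2 * Real.log (1 + x₂ / x₁) := by
          rw [Real.log_pow]; push_cast; ring
  nlinarith [h1, h2, h3, hlogB]

end
end

section
/- For all real numbers x₁, x₂ with 0 < x₁ ≤ 1 and 0 < x₂: ∫_{x₁}^1 ∫_{x₂}^{3x₂} z₁ z₂ / (z₁² + z₂²)² dz₂ dz₁ ≤ (1/2) log 3. -/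
open MeasureTheory Set

noncomputable section

/-- **Elementary integral bound (Zlatoš, proof of Lemma 2.1).**  For 0 < x₁ ≤ 1 and
0 < x₂, ∫_{x₁}^1 ∫_{x₂}^{3x₂} z₁z₂/(z₁²+z₂²)² dz₂ dz₁ ≤ (1/2) log 3. -/
theorem shifted_corner_integral_bound (x₁ x₂ : ℝ) (hx₁ : 0 < x₁) (hx₁' : x₁ ≤ 1)
    (hx₂ : 0 < x₂) :
    (∫⁻ z₁ in Set.Icc x₁ 1, ∫⁻ z₂ in Set.Icc x₂ (3 * x₂),
        ENNReal.ofReal (z₁ * z₂ / (z₁ ^ 2 + z₂ ^ 2) ^ 2)) ≤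
      ENNReal.ofReal (1 / 2 * Real.log 3) := by
  set I : ℝ → ℝ := fun z₁ =>
    z₁ / 2 * (1 / (z₁ ^ 2 + x₂ ^ 2) - 1 / (z₁ ^ 2 + 9 * x₂ ^ 2)) with hIdef
  have hle : x₂ ≤ 3 * x₂ := by nlinarith
  -- Step 1: inner integral
  have key : ∀ z₁ ∈ Icc x₁ (1:ℝ),
      (∫⁻ z₂ in Icc x₂ (3 * x₂), ENNReal.ofReal (z₁ * z₂ / (z₁ ^ 2 + z₂ ^ 2) ^ 2))
        = ENNReal.ofReal (I z₁) := by
    intro z₁ hz₁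
    have hz : 0 < z₁ := lt_of_lt_of_le hx₁ hz₁.1
    have hpos : ∀ t : ℝ, 0 < z₁ ^ 2 + t ^ 2 := fun t => by positivity
    have hcont : ContinuousOn (fun z₂ : ℝ => z₁ * z₂ / (z₁ ^ 2 + z₂ ^ 2) ^ 2)
        (Icc x₂ (3 * x₂)) := by
      apply ContinuousOn.div (by fun_prop) (by fun_prop)
      intro t _
      positivity
    have hint : IntegrableOn (fun z₂ : ℝ => z₁ * z₂ / (z₁ ^ 2 + z₂ ^ 2) ^ 2)
        (Icc x₂ (3 * x₂)) := hcont.integrableOn_Icc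
    have hnn : 0 ≤ᵐ[volume.restrict (Icc x₂ (3 * x₂))]
        fun z₂ : ℝ => z₁ * z₂ / (z₁ ^ 2 + z₂ ^ 2) ^ 2 := by
      refine (ae_restrict_iff' measurableSet_Icc).2 (ae_of_all _ fun t ht => ?_)
      have : 0 < t := lt_of_lt_of_le hx₂ ht.1
      positivity
    rw [← ofReal_integral_eq_lintegral_ofReal hint hnn]
    congr 1
    have hderiv : ∀ t ∈ uIcc x₂ (3 * x₂),
        HasDerivAt (fun t : ℝ => -(z₁ / 2) * (z₁ ^ 2 + t ^ 2)⁻¹)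
          (z₁ * t / (z₁ ^ 2 + t ^ 2) ^ 2) t := by
      intro t _
      have h1 : HasDerivAt (fun t : ℝ => z₁ ^ 2 + t ^ 2) (2 * t) t := by
        simpa using (hasDerivAt_pow 2 t).const_add (z₁ ^ 2)
      have h2 : HasDerivAt (fun t : ℝ => -(z₁ / 2) * (z₁ ^ 2 + t ^ 2)⁻¹)
          (-(z₁ / 2) * (-(2 * t) / (z₁ ^ 2 + t ^ 2) ^ 2)) t :=
        (h1.inv (ne_of_gt (hpos t))).const_mul (-(z₁ / 2))
      convert h2 using 1
      have := (hpos t).ne'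
      field_simp
    have hcont' : ContinuousOn (fun t : ℝ => z₁ * t / (z₁ ^ 2 + t ^ 2) ^ 2)
        (uIcc x₂ (3 * x₂)) := by
      apply ContinuousOn.div (by fun_prop) (by fun_prop)
      intro t _
      positivity
    have := intervalIntegral.integral_eq_sub_of_hasDerivAt hderiv
      (hcont'.intervalIntegrable)
    rw [MeasureTheory.integral_Icc_eq_integral_Ioc,
      ← intervalIntegral.integral_of_le hle, this, hIdef]
    have h9 : (0:ℝ) < z₁ ^ 2 + 9 * x₂ ^ 2 := by positivity
    have h1' : (0:ℝ) < z₁ ^ 2 + x₂ ^ 2 := by positivity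
    field_simp
    ring
  rw [setLIntegral_congr_fun measurableSet_Icc key]
  -- Step 2: outer integral
  have hIcont : ContinuousOn I (Icc x₁ 1) := by
    apply ContinuousOn.mul (by fun_prop)
    apply ContinuousOn.sub
    · apply ContinuousOn.div (by fun_prop) (by fun_prop)
      intro t _; positivity
    · apply ContinuousOn.div (by fun_prop) (by fun_prop)
      intro t _; positivity
  have hIint : IntegrableOn I (Icc x₁ 1) := hIcont.integrableOn_Icc
  have hInn : 0 ≤ᵐ[volume.restrict (Icc x₁ 1)] I := by
    refine (ae_restrict_iff' measurableSet_Icc).2 (ae_of_all _ fun t ht => ?_)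
    have ht0 : 0 < t := lt_of_lt_of_le hx₁ ht.1
    have h1 : (0:ℝ) < t ^ 2 + x₂ ^ 2 := by positivity
    have h2 : (0:ℝ) < t ^ 2 + 9 * x₂ ^ 2 := by positivity
    have : 1 / (t ^ 2 + 9 * x₂ ^ 2) ≤ 1 / (t ^ 2 + x₂ ^ 2) := by
      apply one_div_le_one_div_of_le h1
      nlinarith
    simp only [hIdef]
    have : 0 ≤ 1 / (t ^ 2 + x₂ ^ 2) - 1 / (t ^ 2 + 9 * x₂ ^ 2) := by linarith
    positivity
  rw [← ofReal_integral_eq_lintegral_ofReal hIint hInn]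
  apply ENNReal.ofReal_le_ofReal
  -- compute the outer integral via antiderivative F
  set F : ℝ → ℝ := fun t =>
    1 / 4 * (Real.log (t ^ 2 + x₂ ^ 2) - Real.log (t ^ 2 + 9 * x₂ ^ 2)) with hFdef
  have hderiv : ∀ t ∈ uIcc x₁ (1:ℝ), HasDerivAt F (I t) t := by
    intro t _
    have h1 : (0:ℝ) < t ^ 2 + x₂ ^ 2 := by positivity
    have h2 : (0:ℝ) < t ^ 2 + 9 * x₂ ^ 2 := by positivity
    have hsq : HasDerivAt (fun t : ℝ => t ^ 2) (2 * t) t := by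
      simpa using hasDerivAt_pow 2 t
    have hA : HasDerivAt (fun t : ℝ => t ^ 2 + x₂ ^ 2) (2 * t) t := hsq.add_const _
    have hB : HasDerivAt (fun t : ℝ => t ^ 2 + 9 * x₂ ^ 2) (2 * t) t := hsq.add_const _
    have hlogA := hA.log h1.ne'
    have hlogB := hB.log h2.ne'
    have : HasDerivAt F
        (1 / 4 * (2 * t / (t ^ 2 + x₂ ^ 2) - 2 * t / (t ^ 2 + 9 * x₂ ^ 2))) t :=
      (hlogA.sub hlogB).const_mul (1 / 4 : ℝ)
    convert this using 1
    simp only [hIdef]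
    field_simp
    ring
  have hIcont' : ContinuousOn I (uIcc x₁ 1) := by
    rw [uIcc_of_le hx₁']
    exact hIcont
  have hcalc := intervalIntegral.integral_eq_sub_of_hasDerivAt hderiv
    hIcont'.intervalIntegrable
  rw [MeasureTheory.integral_Icc_eq_integral_Ioc,
    ← intervalIntegral.integral_of_le hx₁', hcalc]
  -- final estimate: F 1 - F x₁ ≤ 1/2 * log 3
  have h1 : (0:ℝ) < 1 + x₂ ^ 2 := by positivity
  have h2 : (0:ℝ) < 1 + 9 * x₂ ^ 2 := by positivity
  have h3 : (0:ℝ) < x₁ ^ 2 + x₂ ^ 2 := by positivity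
  have h4 : (0:ℝ) < x₁ ^ 2 + 9 * x₂ ^ 2 := by positivity
  have e1 : Real.log (1 + x₂ ^ 2) ≤ Real.log (1 + 9 * x₂ ^ 2) := by
    apply Real.log_le_log h1
    nlinarith
  have e2 : Real.log (x₁ ^ 2 + 9 * x₂ ^ 2) ≤
      Real.log 9 + Real.log (x₁ ^ 2 + x₂ ^ 2) := by
    rw [← Real.log_mul (by norm_num) h3.ne']
    apply Real.log_le_log h4
    nlinarith
  have e3 : Real.log 9 = 2 * Real.log 3 := by
    rw [show (9:ℝ) = 3 ^ 2 by norm_num, Real.log_pow]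
    norm_num
  simp only [hFdef, one_pow]
  nlinarith [e1, e2, e3]

end
end

section
/- There is a universal constant C < ∞ with the following property. Let 0 < x₁ < x₂ ≤ 1/2, set x = (x₁, x₂), and let ω : [0,2x₂]² → ℝ be Lipschitz with ‖∇ω‖_{L^∞([0,2x₂]²)} ≤ M. Then | ∫_{2x₁}^{2x₂} ∫₀^{2x₂} y₁ (x₂ − y₂) / ( |x−y|² |x−ỹ|² ) ω(y) dy₂ dy₁ | ≤ C M x₂, where ỹ := (−y₁, y₂). -/
open MeasureTheory Set

noncomputable section

private lemma arctan_aux (a c d u v : ℝ) (ha : 0 < a) (hd : 0 ≤ d) :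
    ∫ t in u..v, d / (a ^ 2 + (c - t) ^ 2) ≤ d * Real.pi / a := by
  have hpos : ∀ t : ℝ, 0 < a ^ 2 + (c - t) ^ 2 := fun t =>
    add_pos_of_pos_of_nonneg (pow_pos ha 2) (sq_nonneg _)
  have hG : ∀ t : ℝ, HasDerivAt (fun s => (d / a) * Real.arctan ((s - c) / a))
      (d / (a ^ 2 + (c - t) ^ 2)) t := by
    intro t
    have h1 : HasDerivAt (fun s : ℝ => (s - c) / a) (1 / a) t := by
      simpa using (((hasDerivAt_id t).sub_const c).div_const a)
    have h2 := (Real.hasDerivAt_arctan ((t - c) / a)).comp t h1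
    have h3 := h2.const_mul (d / a)
    refine h3.congr_deriv ?_
    have h4 : (1 : ℝ) + ((t - c) / a) ^ 2 ≠ 0 := by positivity
    field_simp
    ring
  have hcont : Continuous fun t : ℝ => d / (a ^ 2 + (c - t) ^ 2) :=
    continuous_const.div (by fun_prop) (fun t => ne_of_gt (hpos t))
  rw [intervalIntegral.integral_eq_sub_of_hasDerivAt (fun t _ => hG t)
    (hcont.intervalIntegrable u v)]
  have h1 := Real.arctan_lt_pi_div_two ((v - c) / a)
  have h2 := Real.neg_pi_div_two_lt_arctan ((u - c) / a)
  have hda : 0 ≤ d / a := div_nonneg hd ha.le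
  have : (d / a) * Real.arctan ((v - c) / a) - (d / a) * Real.arctan ((u - c) / a)
      ≤ (d / a) * Real.pi := by
    rw [← mul_sub]
    exact mul_le_mul_of_nonneg_left (by linarith) hda
  calc (d / a) * Real.arctan ((v - c) / a) - (d / a) * Real.arctan ((u - c) / a)
      ≤ (d / a) * Real.pi := this
    _ = d * Real.pi / a := by ring

/-- **Cancellation estimate on the middle strip (Zlatoš, proof of Lemma 2.1).**  There
is a universal constant C such that for 0 < x₁ < x₂ ≤ 1/2 and any ω Lipschitz on
[0,2x₂]² with gradient bounded by M (expressed as a Euclidean Lipschitz bound),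
| ∫_{2x₁}^{2x₂} ∫₀^{2x₂} y₁(x₂-y₂)/(|x-y|²|x-ỹ|²) ω(y) dy₂ dy₁ | ≤ C M x₂,
where x = (x₁,x₂) and ỹ = (-y₁,y₂). -/
theorem middle_strip_cancellation_estimate :
    ∃ C : ℝ, ∀ (x₁ x₂ M : ℝ) (ω : ℝ × ℝ → ℝ),
      0 < x₁ → x₁ < x₂ → x₂ ≤ 1 / 2 → 0 ≤ M →
      (∀ y ∈ Set.Icc ((0 : ℝ), (0 : ℝ)) (2 * x₂, 2 * x₂),
        ∀ z ∈ Set.Icc ((0 : ℝ), (0 : ℝ)) (2 * x₂, 2 * x₂),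
          |ω y - ω z| ≤ M * Real.sqrt ((y.1 - z.1) ^ 2 + (y.2 - z.2) ^ 2)) →
      |∫ y₁ in Set.Icc (2 * x₁) (2 * x₂), ∫ y₂ in Set.Icc (0 : ℝ) (2 * x₂),
          y₁ * (x₂ - y₂) /
              (((x₁ - y₁) ^ 2 + (x₂ - y₂) ^ 2) * ((x₁ + y₁) ^ 2 + (x₂ - y₂) ^ 2)) *
            ω (y₁, y₂)| ≤ C * M * x₂ := by
  refine ⟨4 * Real.pi, ?_⟩
  intro x₁ x₂ M ω hx₁ hx12 hx2 hM hLip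
  have h2x : (0 : ℝ) ≤ 2 * x₂ := by linarith
  set S : Set ℝ := Set.Icc (0 : ℝ) (2 * x₂) with hS
  set K : ℝ → ℝ → ℝ := fun y₁ y₂ =>
    y₁ * (x₂ - y₂) /
      (((x₁ - y₁) ^ 2 + (x₂ - y₂) ^ 2) * ((x₁ + y₁) ^ 2 + (x₂ - y₂) ^ 2)) with hK
  -- inner bound
  have inner : ∀ y₁ ∈ Set.Icc (2 * x₁) (2 * x₂),
      ‖∫ y₂ in S, K y₁ y₂ * ω (y₁, y₂)‖ ≤ 2 * Real.pi * M := by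
    rintro y₁ ⟨hy₁l, hy₁r⟩
    have ha : 0 < y₁ - x₁ := by linarith
    have hy₁ : 0 < y₁ := by linarith
    have hApos : ∀ t : ℝ, 0 < (x₁ - y₁) ^ 2 + (x₂ - t) ^ 2 := fun t =>
      add_pos_of_pos_of_nonneg (by nlinarith) (sq_nonneg _)
    have hBpos : ∀ t : ℝ, 0 < (x₁ + y₁) ^ 2 + (x₂ - t) ^ 2 := fun t =>
      add_pos_of_pos_of_nonneg (by nlinarith) (sq_nonneg _)
    have hKcont : Continuous (K y₁) := by
      apply Continuous.div (by fun_prop) (by fun_prop)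
      intro t; exact ne_of_gt (mul_pos (hApos t) (hBpos t))
    -- continuity of the ω slice
    have hωcont : ContinuousOn (fun t => ω (y₁, t)) S := by
      apply LipschitzOnWith.continuousOn (K := Real.toNNReal M)
      apply LipschitzOnWith.of_dist_le_mul
      intro p hp q hq
      have hmemp : (y₁, p) ∈ Set.Icc ((0:ℝ), (0:ℝ)) (2 * x₂, 2 * x₂) := by
        simp only [Set.mem_Icc, Prod.mk_le_mk]
        exact ⟨⟨by linarith, hp.1⟩, hy₁r, hp.2⟩
      have hmemq : (y₁, q) ∈ Set.Icc ((0:ℝ), (0:ℝ)) (2 * x₂, 2 * x₂) := by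
        simp only [Set.mem_Icc, Prod.mk_le_mk]
        exact ⟨⟨by linarith, hq.1⟩, hy₁r, hq.2⟩
      have := hLip (y₁, p) hmemp (y₁, q) hmemq
      simp only [sub_self, zero_pow, ne_eq, OfNat.ofNat_ne_zero, not_false_eq_true,
        zero_add, Real.sqrt_sq_eq_abs] at this
      rw [Real.dist_eq, Real.dist_eq]
      calc |ω (y₁, p) - ω (y₁, q)| ≤ M * |p - q| := this
        _ = (Real.toNNReal M : ℝ) * |p - q| := by rw [Real.coe_toNNReal M hM]
    have hmem : ∀ t ∈ S, (y₁, t) ∈ Set.Icc ((0:ℝ), (0:ℝ)) (2 * x₂, 2 * x₂) := by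
      intro t ht
      simp only [Set.mem_Icc, Prod.mk_le_mk]
      exact ⟨⟨by linarith, ht.1⟩, hy₁r, ht.2⟩
    have hx₂S : x₂ ∈ S := ⟨by linarith, by linarith⟩
    have hlip' : ∀ t ∈ S, |ω (y₁, t) - ω (y₁, x₂)| ≤ M * |x₂ - t| := by
      intro t ht
      have := hLip (y₁, t) (hmem t ht) (y₁, x₂) (hmem x₂ hx₂S)
      simp only [sub_self, zero_pow, ne_eq, OfNat.ofNat_ne_zero, not_false_eq_true,
        zero_add, Real.sqrt_sq_eq_abs] at this
      rwa [abs_sub_comm t x₂] at this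
    -- cancellation of the kernel
    have hcancel : ∫ y₂ in S, K y₁ y₂ = 0 := by
      rw [hS, MeasureTheory.integral_Icc_eq_integral_Ioc,
        ← intervalIntegral.integral_of_le h2x]
      have h1 : (∫ t in (0:ℝ)..(2 * x₂), K y₁ (2 * x₂ - t))
          = ∫ t in (2 * x₂ - 2 * x₂)..(2 * x₂ - 0), K y₁ t :=
        intervalIntegral.integral_comp_sub_left (K y₁) (2 * x₂)
      have hneg : ∀ t : ℝ, K y₁ (2 * x₂ - t) = -K y₁ t := by
        intro t; simp only [hK]; ring
      simp only [hneg, sub_self, sub_zero, intervalIntegral.integral_neg] at h1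
      linarith
    -- integrability
    have hωS : IntegrableOn (fun t => K y₁ t * ω (y₁, t)) S :=
      (hKcont.continuousOn.mul hωcont).integrableOn_compact isCompact_Icc
    have hKS : IntegrableOn (K y₁) S :=
      hKcont.continuousOn.integrableOn_compact isCompact_Icc
    set c := ω (y₁, x₂) with hc
    have hsplit : (∫ y₂ in S, K y₁ y₂ * ω (y₁, y₂))
        = ∫ y₂ in S, K y₁ y₂ * (ω (y₁, y₂) - c) := by
      have heq : (fun y₂ => K y₁ y₂ * (ω (y₁, y₂) - c))
          = fun y₂ => K y₁ y₂ * ω (y₁, y₂) - K y₁ y₂ * c := by funext t; ring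
      rw [heq, integral_sub hωS (hKS.mul_const c), integral_mul_const, hcancel]
      simp
    rw [hsplit]
    -- pointwise bound on the integrand
    have hbd : ∀ t ∈ S, ‖K y₁ t * (ω (y₁, t) - c)‖
        ≤ (y₁ * M) / ((x₁ - y₁) ^ 2 + (x₂ - t) ^ 2) := by
      intro t ht
      rw [Real.norm_eq_abs, abs_mul]
      have hA := hApos t
      have hB := hBpos t
      have h1 : |K y₁ t| = y₁ * |x₂ - t| /
          (((x₁ - y₁) ^ 2 + (x₂ - t) ^ 2) * ((x₁ + y₁) ^ 2 + (x₂ - t) ^ 2)) := by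
        rw [hK, abs_div, abs_mul, abs_of_pos hy₁, abs_of_pos (mul_pos hA hB)]
      have h2 := hlip' t ht
      have hd2 : |x₂ - t| * |x₂ - t| = (x₂ - t) ^ 2 := by
        rw [abs_mul_abs_self]; ring
      have key : y₁ * |x₂ - t| /
          (((x₁ - y₁) ^ 2 + (x₂ - t) ^ 2) * ((x₁ + y₁) ^ 2 + (x₂ - t) ^ 2))
          * (M * |x₂ - t|)
          ≤ y₁ * M / ((x₁ - y₁) ^ 2 + (x₂ - t) ^ 2) := by
        have e1 : y₁ * |x₂ - t| * (M * |x₂ - t|) = y₁ * M * (x₂ - t) ^ 2 := by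
          calc y₁ * |x₂ - t| * (M * |x₂ - t|)
              = y₁ * M * (|x₂ - t| * |x₂ - t|) := by ring
            _ = y₁ * M * (x₂ - t) ^ 2 := by rw [hd2]
        rw [div_mul_eq_mul_div, e1, div_le_div_iff₀ (mul_pos hA hB) hA]
        nlinarith [mul_nonneg (mul_nonneg (mul_nonneg hy₁.le hM) hA.le)
          (sq_nonneg (x₁ + y₁))]
      calc |K y₁ t| * |ω (y₁, t) - c|
          ≤ (y₁ * |x₂ - t| /
            (((x₁ - y₁) ^ 2 + (x₂ - t) ^ 2) * ((x₁ + y₁) ^ 2 + (x₂ - t) ^ 2)))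
            * (M * |x₂ - t|) := by
            rw [h1]
            exact mul_le_mul_of_nonneg_left h2 (by positivity)
        _ ≤ y₁ * M / ((x₁ - y₁) ^ 2 + (x₂ - t) ^ 2) := key
    -- integrate the bound
    have hgcont : Continuous fun t : ℝ => (y₁ * M) / ((x₁ - y₁) ^ 2 + (x₂ - t) ^ 2) :=
      continuous_const.div (by fun_prop) (fun t => ne_of_gt (hApos t))
    have hgint : IntegrableOn (fun t => (y₁ * M) / ((x₁ - y₁) ^ 2 + (x₂ - t) ^ 2)) S :=
      hgcont.continuousOn.integrableOn_compact isCompact_Icc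
    have hnorm : ‖∫ y₂ in S, K y₁ y₂ * (ω (y₁, y₂) - c)‖
        ≤ ∫ t in S, (y₁ * M) / ((x₁ - y₁) ^ 2 + (x₂ - t) ^ 2) := by
      apply MeasureTheory.norm_integral_le_of_norm_le hgint
      exact (ae_restrict_iff' measurableSet_Icc).2 (Filter.Eventually.of_forall hbd)
    refine hnorm.trans ?_
    have hval : (∫ t in S, (y₁ * M) / ((x₁ - y₁) ^ 2 + (x₂ - t) ^ 2))
        ≤ 2 * Real.pi * M := by
      rw [hS, MeasureTheory.integral_Icc_eq_integral_Ioc,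
        ← intervalIntegral.integral_of_le h2x]
      have hrw : ∀ t : ℝ, (y₁ * M) / ((x₁ - y₁) ^ 2 + (x₂ - t) ^ 2)
          = (y₁ * M) / ((y₁ - x₁) ^ 2 + (x₂ - t) ^ 2) := by
        intro t; ring_nf
      simp only [hrw]
      refine (arctan_aux (y₁ - x₁) x₂ (y₁ * M) 0 (2 * x₂) ha (by positivity)).trans ?_
      rw [div_le_iff₀ ha]
      nlinarith [Real.pi_pos, mul_nonneg (mul_nonneg Real.pi_pos.le hM)
        (show (0:ℝ) ≤ y₁ - 2 * x₁ by linarith)]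
    exact hval
  -- outer integral
  have hfin : volume (Set.Icc (2 * x₁) (2 * x₂)) < ⊤ := measure_Icc_lt_top
  have hout := MeasureTheory.norm_setIntegral_le_of_norm_le_const hfin
    inner
  rw [Measure.real, Real.volume_Icc, ENNReal.toReal_ofReal (by linarith : (0:ℝ) ≤ 2 * x₂ - 2 * x₁)]
    at hout
  rw [← Real.norm_eq_abs]
  refine hout.trans ?_
  nlinarith [Real.pi_pos, mul_nonneg (mul_nonneg Real.pi_pos.le hM) hx₁.le]

end
end

section
/- There is a universal constant C > 0 with the following property. For every δ ∈ (0, 1/10), every measurable function ω : [0,1]² → [0,1] such that the Lebesgue measure of { y ∈ [0,1]² : ω(y) = 1 } is at least 1 − δ, and every x ∈ [0,δ]²: ∫_{Q(2x)} ( y₁ y₂ / |y|⁴ ) ω(y) dy ≥ (1/C) |log δ|. -/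
open MeasureTheory Set

noncomputable section

lemma aux_log10 : (9/4 : ℝ) ≤ Real.log 10 := by
  rw [Real.le_log_iff_exp_le (by norm_num)]
  have h4 : (Real.exp (9/4))^4 = Real.exp 9 := by
    rw [← Real.exp_nat_mul]; norm_num
  have h9 : Real.exp 9 = (Real.exp 1)^9 := by
    rw [← Real.exp_nat_mul]; norm_num
  have hlt : (Real.exp (9/4))^4 < 10^4 := by
    rw [h4, h9]
    calc (Real.exp 1)^9 < 2.7182818286^9 :=
          pow_lt_pow_left₀ Real.exp_one_lt_d9 (Real.exp_pos 1).le (by norm_num)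
      _ < 10^4 := by norm_num
  exact (lt_of_pow_lt_pow_left₀ 4 (by norm_num) hlt).le

lemma aux_hkey (k : ℕ) : (4:ℝ)^(k+1) * ((1/2)^(k+1)*(1/2)^(k+1)) = 1 := by
  rw [← mul_pow, ← mul_pow]; norm_num

lemma aux_sub (δ:ℝ) (x:ℝ×ℝ) (k:ℕ) (hδ0:0<δ) (hx3:x.1≤δ) (hx4:x.2≤δ)
    (hb:(4:ℝ)^k*(8*δ)≤1) :
    (Set.Ioc ((1/2:ℝ)^(k+1)) ((1/2)^k) ×ˢ Set.Ioc ((1/2:ℝ)^(k+1)) ((1/2)^k)) ⊆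
      Set.Icc (2*x.1, 2*x.2) ((1:ℝ),(1:ℝ)) := by
  intro y hy
  obtain ⟨⟨hy1, hy2⟩, hy3, hy4⟩ := hy
  have h2k : (2:ℝ)^k ≤ 4^k := pow_le_pow_left₀ (by norm_num) (by norm_num) k
  have hp2 : (0:ℝ) < 2^k := by positivity
  have hδk : δ ≤ (1/2:ℝ)^(k+2) := by
    have h : ((1/2:ℝ))^(k+2) = 1/(2^k*4) := by
      rw [div_pow, one_pow, pow_succ, pow_succ]; ring
    rw [h, le_div_iff₀ (by positivity)]
    nlinarith
  have hhalf : ((1/2:ℝ))^(k+1) = 2 * (1/2)^(k+2) := by rw [pow_succ]; ring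
  have hle1 : ((1:ℝ)/2)^k ≤ 1 := pow_le_one₀ (by norm_num) (by norm_num)
  refine ⟨⟨show 2*x.1 ≤ y.1 by nlinarith, show 2*x.2 ≤ y.2 by nlinarith⟩,
    show y.1 ≤ 1 by nlinarith, show y.2 ≤ 1 by nlinarith⟩

lemma aux_subQ (k:ℕ) :
    (Set.Ioc ((1/2:ℝ)^(k+1)) ((1/2)^k) ×ˢ Set.Ioc ((1/2:ℝ)^(k+1)) ((1/2)^k)) ⊆
      Set.Icc ((0:ℝ),(0:ℝ)) ((1:ℝ),(1:ℝ)) := by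
  intro y hy
  obtain ⟨⟨hy1, hy2⟩, hy3, hy4⟩ := hy
  have hp1 : (0:ℝ) < (1/2:ℝ)^(k+1) := by positivity
  have hle1 : ((1:ℝ)/2)^k ≤ 1 := pow_le_one₀ (by norm_num) (by norm_num)
  refine ⟨⟨show (0:ℝ) ≤ y.1 by linarith, show (0:ℝ) ≤ y.2 by linarith⟩,
    show y.1 ≤ 1 by linarith, show y.2 ≤ 1 by linarith⟩

lemma aux_disj (i j : ℕ) (hij : i < j) :
    Disjoint (Set.Ioc ((1/2:ℝ)^(i+1)) ((1/2)^i) ×ˢ Set.Ioc ((1/2:ℝ)^(i+1)) ((1/2)^i))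
      (Set.Ioc ((1/2:ℝ)^(j+1)) ((1/2)^j) ×ˢ Set.Ioc ((1/2:ℝ)^(j+1)) ((1/2)^j)) := by
  rw [Set.disjoint_left]
  rintro y ⟨⟨hya, hyb⟩, -⟩ ⟨⟨hza, hzb⟩, -⟩
  have : ((1:ℝ)/2)^j ≤ (1/2)^(i+1) :=
    pow_le_pow_of_le_one (by norm_num) (by norm_num) hij
  linarith

lemma aux_volS (k : ℕ) :
    volume (Set.Ioc ((1/2:ℝ)^(k+1)) ((1/2)^k) ×ˢ Set.Ioc ((1/2:ℝ)^(k+1)) ((1/2)^k)) =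
      ENNReal.ofReal ((1/2:ℝ)^(k+1) * (1/2)^(k+1)) := by
  rw [Measure.volume_eq_prod, Measure.prod_prod, Real.volume_Ioc]
  have h : ((1:ℝ)/2)^k - (1/2)^(k+1) = (1/2)^(k+1) := by rw [pow_succ]; ring
  rw [h, ← ENNReal.ofReal_mul (by positivity)]

/-- pointwise lower bound on the kernel on the dyadic square. -/
lemma aux_point (k : ℕ) (y : ℝ × ℝ)
    (hy1 : y.1 ∈ Set.Ioc ((1/2:ℝ)^(k+1)) ((1/2)^k))
    (hy2 : y.2 ∈ Set.Ioc ((1/2:ℝ)^(k+1)) ((1/2)^k)) :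
    (4:ℝ)^k/16 ≤ y.1 * y.2 / (y.1 ^ 2 + y.2 ^ 2) ^ 2 := by
  have hkey := aux_hkey k
  have ha : (0:ℝ) < (1/2:ℝ)^(k+1) := by positivity
  have hhalf : ((1:ℝ)/2)^k = 2 * (1/2)^(k+1) := by rw [pow_succ]; ring
  obtain ⟨hy1a, hy1b⟩ := hy1
  obtain ⟨hy2a, hy2b⟩ := hy2
  have hy1p : 0 < y.1 := lt_trans ha hy1a
  have hy2p : 0 < y.2 := lt_trans ha hy2a
  have hnum : (1/2:ℝ)^(k+1) * (1/2)^(k+1) ≤ y.1 * y.2 :=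
    mul_le_mul hy1a.le hy2a.le ha.le hy1p.le
  have hsq1 : y.1^2 ≤ (2*(1/2:ℝ)^(k+1))^2 :=
    pow_le_pow_left₀ hy1p.le (hy1b.trans_eq hhalf) 2
  have hsq2 : y.2^2 ≤ (2*(1/2:ℝ)^(k+1))^2 :=
    pow_le_pow_left₀ hy2p.le (hy2b.trans_eq hhalf) 2
  have hden : (y.1^2 + y.2^2)^2 ≤ 64 * ((1/2:ℝ)^(k+1) * (1/2)^(k+1))^2 := by
    have hsum : y.1^2 + y.2^2 ≤ 8 * ((1/2:ℝ)^(k+1) * (1/2)^(k+1)) := by nlinarith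
    calc (y.1^2 + y.2^2)^2 ≤ (8 * ((1/2:ℝ)^(k+1) * (1/2)^(k+1)))^2 :=
          pow_le_pow_left₀ (by positivity) hsum 2
      _ = 64 * ((1/2:ℝ)^(k+1) * (1/2)^(k+1))^2 := by ring
  have hDpos : (0:ℝ) < (y.1^2 + y.2^2)^2 := by positivity
  have heq : (4:ℝ)^k/16 =
      ((1/2:ℝ)^(k+1) * (1/2)^(k+1)) / (64 * ((1/2:ℝ)^(k+1) * (1/2)^(k+1))^2) := by
    rw [eq_div_iff (by positivity)]
    linear_combination ((1/2:ℝ)^(k+1) * (1/2)^(k+1)) * hkey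
  rw [heq]
  exact div_le_div₀ (by positivity) hnum hDpos hden

lemma aux_delta_small (δ : ℝ) (k : ℕ) (hδ0 : 0 < δ) (hb : (4:ℝ)^k*(8*δ) ≤ 1) :
    δ ≤ ((1/2:ℝ)^(k+1) * (1/2)^(k+1))/2 := by
  have hkey := aux_hkey k
  have h4 : (0:ℝ) < 4^k := by positivity
  have haa : ((1/2:ℝ)^(k+1) * (1/2)^(k+1)) = 1/(4:ℝ)^(k+1) := by
    rw [eq_div_iff (by positivity : ((4:ℝ)^(k+1)) ≠ 0)]
    linear_combination hkey
  rw [haa, pow_succ, div_div, le_div_iff₀ (by positivity)]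
  nlinarith

/-- **Key lower bound of Kiselev–Šverák (as used by Zlatoš).**  There is a universal
constant C > 0 such that for every δ ∈ (0,1/10), every measurable ω : [0,1]² → [0,1]
equal to 1 on a subset of [0,1]² of measure at least 1-δ, and every x ∈ [0,δ]²,
∫_{Q(2x)} (y₁y₂/|y|⁴) ω(y) dy ≥ (1/C)|log δ|. -/
theorem key_integral_lower_bound :
    ∃ C : ℝ, 0 < C ∧ ∀ (δ : ℝ) (ω : ℝ × ℝ → ℝ) (x : ℝ × ℝ),
      δ ∈ Set.Ioo (0 : ℝ) (1 / 10) →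
      Measurable ω →
      (∀ y ∈ Set.Icc ((0 : ℝ), (0 : ℝ)) ((1 : ℝ), (1 : ℝ)), ω y ∈ Set.Icc (0 : ℝ) 1) →
      ENNReal.ofReal (1 - δ) ≤
        volume {y ∈ Set.Icc ((0 : ℝ), (0 : ℝ)) ((1 : ℝ), (1 : ℝ)) | ω y = 1} →
      x ∈ Set.Icc ((0 : ℝ), (0 : ℝ)) (δ, δ) →
      ENNReal.ofReal (1 / C * |Real.log δ|) ≤
        ∫⁻ y in Set.Icc (2 * x.1, 2 * x.2) ((1 : ℝ), (1 : ℝ)),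
          ENNReal.ofReal (y.1 * y.2 / (y.1 ^ 2 + y.2 ^ 2) ^ 2 * ω y) := by
  refine ⟨12800, by norm_num, ?_⟩
  rintro δ ω x ⟨hδ0, hδ10⟩ hω _hω01 hG hx
  obtain ⟨⟨hx1, hx2⟩, hx3, hx4⟩ := hx
  set G : Set (ℝ × ℝ) :=
    {y ∈ Set.Icc ((0 : ℝ), (0 : ℝ)) ((1 : ℝ), (1 : ℝ)) | ω y = 1} with hGdef
  have hGmeas : MeasurableSet G :=
    measurableSet_Icc.inter (hω (measurableSet_singleton 1))
  have hGQ : G ⊆ Set.Icc ((0 : ℝ), (0 : ℝ)) ((1 : ℝ), (1 : ℝ)) := fun y hy => hy.1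
  clear _hω01
  -- the bad set is small
  have hvolQ : volume (Set.Icc ((0 : ℝ), (0 : ℝ)) ((1 : ℝ), (1 : ℝ))) = 1 := by
    rw [Icc_prod_eq, Measure.volume_eq_prod, Measure.prod_prod]
    simp [Real.volume_Icc]
  have hbad : volume (Set.Icc ((0 : ℝ), (0 : ℝ)) ((1 : ℝ), (1 : ℝ)) \ G) ≤
      ENNReal.ofReal δ := by
    have hGfin : volume G ≠ ⊤ := by
      refine (lt_of_le_of_lt (measure_mono hGQ) ?_).ne
      rw [hvolQ]; exact ENNReal.one_lt_top
    rw [measure_diff hGQ hGmeas.nullMeasurableSet hGfin, hvolQ]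
    calc (1:ENNReal) - volume G ≤ 1 - ENNReal.ofReal (1 - δ) := tsub_le_tsub_left hG 1
      _ = ENNReal.ofReal 1 - ENNReal.ofReal (1 - δ) := by rw [ENNReal.ofReal_one]
      _ = ENNReal.ofReal (1 - (1 - δ)) := (ENNReal.ofReal_sub _ (by linarith)).symm
      _ = ENNReal.ofReal δ := by norm_num
  -- logarithm facts
  have hlogδ : Real.log δ < 0 := Real.log_neg hδ0 (by linarith)
  have habs : |Real.log δ| = -Real.log δ := abs_of_neg hlogδ
  have hL94 : (9/4 : ℝ) ≤ -Real.log δ := by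
    have h10 : (10:ℝ) ≤ δ⁻¹ := by
      rw [le_inv_comm₀ (by norm_num) hδ0]; linarith
    calc (9/4 : ℝ) ≤ Real.log 10 := aux_log10
      _ ≤ Real.log δ⁻¹ := Real.log_le_log (by norm_num) h10
      _ = -Real.log δ := by rw [Real.log_inv]
  -- the number of dyadic squares
  have hδ8 : (0:ℝ) < 8 * δ := by linarith
  have ht1 : (1:ℝ) < 1 / (8 * δ) := by
    rw [lt_div_iff₀ hδ8]; linarith
  set N : ℕ := ⌊Real.logb 4 (1/(8*δ))⌋₊ + 1 with hNdef
  have hlogb0 : 0 ≤ Real.logb 4 (1/(8*δ)) := Real.logb_nonneg (by norm_num) ht1.le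
  have h1 : ∀ k, k < N → (4:ℝ)^k * (8*δ) ≤ 1 := by
    intro k hk
    have hk' : (k:ℝ) ≤ Real.logb 4 (1/(8*δ)) := by
      have hkle : k ≤ ⌊Real.logb 4 (1/(8*δ))⌋₊ := Nat.lt_succ_iff.mp hk
      calc (k:ℝ) ≤ (⌊Real.logb 4 (1/(8*δ))⌋₊ : ℝ) := Nat.cast_le.mpr hkle
        _ ≤ _ := Nat.floor_le hlogb0
    have h4k : (4:ℝ)^k ≤ 1/(8*δ) := by
      calc (4:ℝ)^k = (4:ℝ)^((k:ℝ)) := (Real.rpow_natCast 4 k).symm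
        _ ≤ (4:ℝ)^(Real.logb 4 (1/(8*δ))) :=
            Real.rpow_le_rpow_of_exponent_le (by norm_num) hk'
        _ = 1/(8*δ) := Real.rpow_logb (by norm_num) (by norm_num) (by positivity)
    exact (le_div_iff₀ hδ8).mp h4k
  have h2 : (-Real.log δ)/100 ≤ (N:ℝ) := by
    have hfloor : Real.logb 4 (1/(8*δ)) < (N:ℝ) := by
      rw [hNdef]; push_cast
      exact Nat.lt_floor_add_one _
    have hlog2pos : (0:ℝ) < Real.log 2 := Real.log_pos (by norm_num)
    have hlogt : Real.log (1/(8*δ)) = -Real.log δ - 3 * Real.log 2 := by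
      rw [one_div, Real.log_inv, Real.log_mul (by norm_num) hδ0.ne']
      rw [show (8:ℝ) = 2^3 by norm_num, Real.log_pow]
      push_cast; ring
    have hlog4 : Real.log 4 = 2 * Real.log 2 := by
      rw [show (4:ℝ) = 2^2 by norm_num, Real.log_pow]; push_cast; ring
    have hlogb : Real.logb 4 (1/(8*δ)) =
        (-Real.log δ - 3*Real.log 2)/(2*Real.log 2) := by
      rw [Real.logb, hlogt, hlog4]
    have l2u : Real.log 2 < 0.6931471808 := Real.log_two_lt_d9
    have key : (-Real.log δ)/100 ≤ (-Real.log δ - 3*Real.log 2)/(2*Real.log 2) := by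
      rw [div_le_div_iff₀ (by norm_num) (by positivity)]
      nlinarith [mul_nonneg (by linarith : (0:ℝ) ≤ -Real.log δ - 9/4)
        (by linarith : (0:ℝ) ≤ 100 - 2*Real.log 2)]
    calc (-Real.log δ)/100 ≤ (-Real.log δ - 3*Real.log 2)/(2*Real.log 2) := key
      _ = Real.logb 4 (1/(8*δ)) := hlogb.symm
      _ ≤ (N:ℝ) := hfloor.le
  -- dyadic squares
  set S : ℕ → Set (ℝ × ℝ) :=
    fun k => Set.Ioc ((1/2:ℝ)^(k+1)) ((1/2)^k) ×ˢ Set.Ioc ((1/2:ℝ)^(k+1)) ((1/2)^k)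
    with hSdef
  have hSmeas : ∀ k, MeasurableSet (S k) := fun k =>
    measurableSet_Ioc.prod measurableSet_Ioc
  have hTmeas : ∀ k, MeasurableSet (S k ∩ G) := fun k => (hSmeas k).inter hGmeas
  -- volume lower bound on good part of each square
  have hvolT : ∀ k, k < N →
      ENNReal.ofReal (((1/2:ℝ)^(k+1) * (1/2)^(k+1))/2) ≤ volume (S k ∩ G) := by
    intro k hk
    have hδle := aux_delta_small δ k hδ0 (h1 k hk)
    have hsplit : volume (S k ∩ G) + volume (S k \ G) = volume (S k) :=
      measure_inter_add_diff (S k) hGmeas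
    have hSG : volume (S k \ G) ≤ ENNReal.ofReal δ :=
      le_trans (measure_mono (diff_subset_diff_left (aux_subQ k))) hbad
    have hne : volume (S k \ G) ≠ ⊤ := (lt_of_le_of_lt hSG ENNReal.ofReal_lt_top).ne
    refine ENNReal.le_of_add_le_add_right hne ?_
    calc ENNReal.ofReal (((1/2:ℝ)^(k+1) * (1/2)^(k+1))/2) + volume (S k \ G)
        ≤ ENNReal.ofReal (((1/2:ℝ)^(k+1) * (1/2)^(k+1))/2) + ENNReal.ofReal δ :=
          add_le_add_right hSG _
      _ = ENNReal.ofReal (((1/2:ℝ)^(k+1) * (1/2)^(k+1))/2 + δ) :=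
          (ENNReal.ofReal_add (by positivity) hδ0.le).symm
      _ ≤ ENNReal.ofReal ((1/2:ℝ)^(k+1) * (1/2)^(k+1)) :=
          ENNReal.ofReal_le_ofReal (by linarith)
      _ = volume (S k) := (aux_volS k).symm
      _ = volume (S k ∩ G) + volume (S k \ G) := hsplit.symm
  -- disjointness
  have hdisj : (↑(Finset.range N) : Set ℕ).PairwiseDisjoint (fun k => S k ∩ G) := by
    intro i _ j _ hij
    rcases lt_or_gt_of_ne hij with h | h
    · exact Disjoint.mono inter_subset_left inter_subset_left (aux_disj i j h)
    · exact (Disjoint.mono inter_subset_left inter_subset_left (aux_disj j i h)).symm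
  -- per-square integral bound
  have hper : ∀ k, k < N → ENNReal.ofReal (1/128) ≤
      ∫⁻ y in S k ∩ G, ENNReal.ofReal (y.1 * y.2 / (y.1 ^ 2 + y.2 ^ 2) ^ 2 * ω y) := by
    intro k hk
    have hkey := aux_hkey k
    have hpt : ∀ y ∈ S k ∩ G, ENNReal.ofReal ((4:ℝ)^k/16) ≤
        ENNReal.ofReal (y.1 * y.2 / (y.1 ^ 2 + y.2 ^ 2) ^ 2 * ω y) := by
      rintro y ⟨⟨hy1, hy2⟩, hyG⟩
      have hωy : ω y = 1 := hyG.2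
      apply ENNReal.ofReal_le_ofReal
      rw [hωy, mul_one]
      exact aux_point k y hy1 hy2
    calc ENNReal.ofReal (1/128)
        = ENNReal.ofReal ((4:ℝ)^k/16 * (((1/2:ℝ)^(k+1) * (1/2)^(k+1))/2)) := by
          congr 1
          linear_combination (-1/128 : ℝ) * hkey
      _ = ENNReal.ofReal ((4:ℝ)^k/16) *
            ENNReal.ofReal (((1/2:ℝ)^(k+1) * (1/2)^(k+1))/2) :=
          ENNReal.ofReal_mul (by positivity)
      _ ≤ ENNReal.ofReal ((4:ℝ)^k/16) * volume (S k ∩ G) :=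
          mul_le_mul_right (hvolT k hk) _
      _ = ∫⁻ _ in S k ∩ G, ENNReal.ofReal ((4:ℝ)^k/16) := (setLIntegral_const _ _).symm
      _ ≤ _ := setLIntegral_mono' (hTmeas k) hpt
  -- main chain
  calc ENNReal.ofReal (1 / 12800 * |Real.log δ|)
      ≤ ENNReal.ofReal ((N:ℝ) * (1/128)) := by
        apply ENNReal.ofReal_le_ofReal
        rw [habs]
        nlinarith
    _ = ∑ _k ∈ Finset.range N, ENNReal.ofReal (1/128) := by
        rw [Finset.sum_const, Finset.card_range, nsmul_eq_mul,
          ENNReal.ofReal_mul (by positivity), ENNReal.ofReal_natCast]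
    _ ≤ ∑ k ∈ Finset.range N,
          ∫⁻ y in S k ∩ G, ENNReal.ofReal (y.1 * y.2 / (y.1 ^ 2 + y.2 ^ 2) ^ 2 * ω y) := by
        apply Finset.sum_le_sum
        intro k hk
        exact hper k (Finset.mem_range.mp hk)
    _ = ∫⁻ y in ⋃ k ∈ Finset.range N, S k ∩ G,
          ENNReal.ofReal (y.1 * y.2 / (y.1 ^ 2 + y.2 ^ 2) ^ 2 * ω y) :=
        (lintegral_biUnion_finset hdisj (fun k _ => hTmeas k) _).symm
    _ ≤ _ := by
        apply lintegral_mono_set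
        intro y hy
        simp only [Set.mem_iUnion] at hy
        obtain ⟨k, hk, hyT⟩ := hy
        exact aux_sub δ x k hδ0 hx3 hx4 (h1 k (Finset.mem_range.mp hk)) hyT.1

end
end
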